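/- arXiv:1501.03011 — 5 statements merged into one kernel-verified Lean document; each statement's English description precedes it below -/
import Mathlib

section
/- Let 𝓕 ∈ K[[x]][y] be an irreducible polynomial of degree d in y, let a be the x-adic valuation of its leading coefficient and b the x-adic valuation of its constant coefficient (as a polynomial in y). Then either a = 0 or b = 0, and every root φ of 𝓕 in the algebraic closure of K((x)) satisfies val_x(φ) = (b−a)/d, where val_x denotes the unique extension of the x-adic valuation to the algebraic closure of K((x)). -/
open Polynomial

noncomputable section



/-- Two real absolute values on a finite-dimensional field extension of a complete
nontrivially normed field which both restrict to the norm on the base field are equal. -/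
theorem absval_le_of_finiteDimensional {L M : Type*} [NontriviallyNormedField L] [CompleteSpace L]
    [Field M] [Algebra L M] [FiniteDimensional L M]
    (f g : AbsoluteValue M ℝ)
    (hf : ∀ c : L, f (algebraMap L M c) = ‖c‖) (hg : ∀ c : L, g (algebraMap L M c) = ‖c‖)
    (z : M) : g z ≤ f z := by
  letI : NormedSpace L (WithAbs f) := by
    refine ⟨fun c x => ?_⟩
    have h1 : (c • x : WithAbs f) = algebraMap L (WithAbs f) c * x := Algebra.smul_def c x
    rw [h1, WithAbs.norm_eq_apply_ofAbs, WithAbs.norm_eq_apply_ofAbs, WithAbs.ofAbs_mul,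
      WithAbs.algebraMap_right_apply, f.map_mul, WithAbs.ofAbs_toAbs, hf]
  letI : NormedSpace L (WithAbs g) := by
    refine ⟨fun c x => ?_⟩
    have h1 : (c • x : WithAbs g) = algebraMap L (WithAbs g) c * x := Algebra.smul_def c x
    rw [h1, WithAbs.norm_eq_apply_ofAbs, WithAbs.norm_eq_apply_ofAbs, WithAbs.ofAbs_mul,
      WithAbs.algebraMap_right_apply, g.map_mul, WithAbs.ofAbs_toAbs, hg]
  letI : FiniteDimensional L (WithAbs f) := inferInstance
  let T : WithAbs f →ₗ[L] WithAbs g :=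
    { toFun := fun x => WithAbs.toAbs g x.ofAbs, map_add' := fun _ _ => rfl, map_smul' := fun _ _ => rfl }
  have hT : Continuous T := T.continuous_of_finiteDimensional
  let C : WithAbs f →L[L] WithAbs g := ⟨T, hT⟩
  have hbound : ∀ w : M, g w ≤ ‖C‖ * f w := fun w => C.le_opNorm (WithAbs.toAbs f w)
  by_cases hz : z = 0
  · simp [hz]
  have hfz : 0 < f z := f.pos hz
  by_contra hlt
  push_neg at hlt
  have hr : 1 < g z / f z := (one_lt_div hfz).mpr hlt
  obtain ⟨n, hn⟩ := pow_unbounded_of_one_lt ‖C‖ hr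
  have hkey : g z ^ n ≤ ‖C‖ * f z ^ n := by
    simpa only [map_pow] using hbound (z ^ n)
  have : (g z / f z) ^ n ≤ ‖C‖ := by
    rw [div_pow, div_le_iff₀ (by positivity)]
    nlinarith [hkey, pow_pos hfz n]
  exact absurd hn (not_lt.mpr this)

theorem absval_eq_of_finiteDimensional {L M : Type*} [NontriviallyNormedField L] [CompleteSpace L]
    [Field M] [Algebra L M] [FiniteDimensional L M]
    (f g : AbsoluteValue M ℝ)
    (hf : ∀ c : L, f (algebraMap L M c) = ‖c‖) (hg : ∀ c : L, g (algebraMap L M c) = ‖c‖)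
    (z : M) : f z = g z :=
  le_antisymm (absval_le_of_finiteDimensional g f hg hf z)
    (absval_le_of_finiteDimensional f g hf hg z)


section VLemmas

variable {Ω : Type*} [Field Ω] (v : Ω → ℚ)
  (hv_mul : ∀ a b : Ω, a ≠ 0 → b ≠ 0 → v (a * b) = v a + v b)
  (hv_add : ∀ a b : Ω, a ≠ 0 → b ≠ 0 → a + b ≠ 0 → min (v a) (v b) ≤ v (a + b))

include hv_mul

theorem v_one' : v 1 = 0 := by
  have := hv_mul 1 1 one_ne_zero one_ne_zero
  simp at this; linarith

theorem v_neg_one' : v (-1) = 0 := by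
  have := hv_mul (-1) (-1) (by norm_num) (by norm_num)
  simp at this
  have h1 := v_one' v hv_mul
  linarith

theorem v_neg' {z : Ω} (hz : z ≠ 0) : v (-z) = v z := by
  have : (-z) = (-1) * z := by ring
  rw [this, hv_mul _ _ (by norm_num) hz, v_neg_one' v hv_mul, zero_add]

theorem v_inv' {z : Ω} (hz : z ≠ 0) : v z⁻¹ = - v z := by
  have := hv_mul z z⁻¹ hz (inv_ne_zero hz)
  rw [mul_inv_cancel₀ hz, v_one' v hv_mul] at this
  linarith

/-- valuation of a product over a multiset of nonzero elements -/
theorem v_prod' (S : Multiset Ω) (hS : ∀ z ∈ S, z ≠ 0) :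
    v S.prod = ((S.map v).sum) := by
  induction S using Multiset.induction with
  | empty => simpa using v_one' v hv_mul
  | cons a s ih =>
    have ha : a ≠ 0 := hS a (Multiset.mem_cons_self a s)
    have hs : ∀ z ∈ s, z ≠ 0 := fun z hz => hS z (Multiset.mem_cons_of_mem hz)
    have hsp : s.prod ≠ 0 := Multiset.prod_ne_zero (fun h => hs 0 h rfl)
    rw [Multiset.prod_cons, hv_mul a s.prod ha hsp, Multiset.map_cons, Multiset.sum_cons, ih hs]

include hv_add

/-- ultrametric bound for a sum over a multiset -/
theorem v_sum_ge' (w : ℚ) (S : Multiset Ω) (hS : ∀ z ∈ S, z ≠ 0 ∧ w ≤ v z) :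
    S.sum = 0 ∨ w ≤ v S.sum := by
  induction S using Multiset.induction with
  | empty => exact Or.inl rfl
  | cons a s ih =>
    have ha := hS a (Multiset.mem_cons_self a s)
    have hs : ∀ z ∈ s, z ≠ 0 ∧ w ≤ v z := fun z hz => hS z (Multiset.mem_cons_of_mem hz)
    rw [Multiset.sum_cons]
    by_cases hs0 : s.sum = 0
    · rw [hs0, add_zero]; exact Or.inr ha.2
    · have hge : w ≤ v s.sum := (ih hs).resolve_left hs0
      by_cases hsum : a + s.sum = 0
      · exact Or.inl hsum
      · refine Or.inr (le_trans (le_min ha.2 hge) (hv_add a s.sum ha.1 hs0 hsum))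

end VLemmas

section MkAbs

variable {Ω : Type*} [Field Ω] (v : Ω → ℚ)
  (hv_mul : ∀ a b : Ω, a ≠ 0 → b ≠ 0 → v (a * b) = v a + v b)
  (hv_add : ∀ a b : Ω, a ≠ 0 → b ≠ 0 → a + b ≠ 0 → min (v a) (v b) ≤ v (a + b))

open scoped Classical

/-- An absolute value attached to `v`. -/
def mkAbs : AbsoluteValue Ω ℝ where
  toFun z := if z = 0 then 0 else (2 : ℝ) ^ (-(v z : ℝ))
  map_mul' x y := by
    rcases eq_or_ne x 0 with rfl | hx
    · simp
    rcases eq_or_ne y 0 with rfl | hy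
    · simp
    have hxy : x * y ≠ 0 := mul_ne_zero hx hy
    simp only [if_neg hx, if_neg hy, if_neg hxy]
    rw [hv_mul x y hx hy, ← Real.rpow_add (by norm_num)]
    push_cast
    ring_nf
  nonneg' z := by
    by_cases hz : z = 0 <;> simp [hz] <;> positivity
  eq_zero' z := by
    show (if z = 0 then (0:ℝ) else (2 : ℝ) ^ (-(v z : ℝ))) = 0 ↔ z = 0
    by_cases hz : z = 0
    · simp [hz]
    · simp only [if_neg hz, hz, iff_false]
      exact ne_of_gt (Real.rpow_pos_of_pos (by norm_num) _)
  add_le' x y := by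
    have hmax : (if x + y = 0 then (0:ℝ) else (2 : ℝ) ^ (-(v (x+y) : ℝ))) ≤
        max (if x = 0 then (0:ℝ) else (2 : ℝ) ^ (-(v x : ℝ)))
          (if y = 0 then (0:ℝ) else (2 : ℝ) ^ (-(v y : ℝ))) := by
      rcases eq_or_ne (x + y) 0 with h0 | h0
      · rw [if_pos h0]
        rcases eq_or_ne x 0 with rfl | hx
        · positivity
        · exact le_max_of_le_left (by rw [if_neg hx]; positivity)
      rcases eq_or_ne x 0 with rfl | hx
      · simp only [zero_add] at h0 ⊢
        rw [if_neg h0]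
        exact le_max_of_le_right le_rfl
      rcases eq_or_ne y 0 with rfl | hy
      · simp only [add_zero] at h0 ⊢
        rw [if_neg h0]
        exact le_max_of_le_left le_rfl
      rw [if_neg h0, if_neg hx, if_neg hy]
      have hmin := hv_add x y hx hy h0
      have : (2:ℝ) ^ (-(v (x+y) : ℝ)) ≤ (2:ℝ) ^ (-(min (v x) (v y) : ℝ)) := by
        apply Real.rpow_le_rpow_left_iff (by norm_num : (1:ℝ) < 2) |>.mpr
        have : (min (v x) (v y) : ℝ) ≤ (v (x+y) : ℝ) := by exact_mod_cast hmin
        linarith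
      refine le_trans this ?_
      rcases le_total (v x) (v y) with h | h
      · rw [min_eq_left (show (v x:ℝ) ≤ (v y:ℝ) by exact_mod_cast h)]; exact le_max_left _ _
      · rw [min_eq_right (show (v y:ℝ) ≤ (v x:ℝ) by exact_mod_cast h)]; exact le_max_right _ _
    have hx0 : (0:ℝ) ≤ (if x = 0 then (0:ℝ) else (2 : ℝ) ^ (-(v x : ℝ))) := by
      by_cases hx : x = 0 <;> simp [hx] <;> positivity
    have hy0 : (0:ℝ) ≤ (if y = 0 then (0:ℝ) else (2 : ℝ) ^ (-(v y : ℝ))) := by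
      by_cases hy : y = 0 <;> simp [hy] <;> positivity
    calc (if x + y = 0 then (0:ℝ) else (2 : ℝ) ^ (-(v (x+y) : ℝ))) ≤ _ := hmax
    _ ≤ _ := max_le_add_of_nonneg hx0 hy0

theorem mkAbs_apply {z : Ω} (hz : z ≠ 0) :
    mkAbs v hv_mul hv_add z = (2 : ℝ) ^ (-(v z : ℝ)) := if_neg hz

theorem mkAbs_eq_iff {z w : Ω} (hz : z ≠ 0) (hw : w ≠ 0) :
    mkAbs v hv_mul hv_add z = mkAbs v hv_mul hv_add w ↔ v z = v w := by
  rw [mkAbs_apply v hv_mul hv_add hz, mkAbs_apply v hv_mul hv_add hw]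
  constructor
  · intro h
    have := (Real.rpow_le_rpow_left_iff (x := 2) (by norm_num)).mp h.le
    have := (Real.rpow_le_rpow_left_iff (x := 2) (by norm_num)).mp h.ge
    have : (v z : ℝ) = (v w : ℝ) := by linarith
    exact_mod_cast this
  · intro h; rw [h]

end MkAbs


open Polynomial

namespace Stmt1Aux

variable (K : Type*) [Field K]

open LaurentSeries
open scoped Multiplicative

/-- rank-one structure on the `X`-adic valuation of Laurent series -/
def rankOneLS : Valuation.RankOne (Valued.v : Valuation (LaurentSeries K) (WithZero (Multiplicative ℤ))) where
  hom' := (WithZeroMulInt.toNNReal (by norm_num : (2 : NNReal) ≠ 0)).comp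
    MonoidWithZeroHom.ValueGroup₀.embedding
  strictMono' := (WithZeroMulInt.toNNReal_strictMono (by norm_num)).comp
    MonoidWithZeroHom.ValueGroup₀.embedding_strictMono
  exists_val_nontrivial := by
    refine ⟨((PowerSeries.X : PowerSeries K) : LaurentSeries K), ?_, ?_⟩
    · have := valuation_X_pow K 1
      rw [pow_one] at this
      rw [this]
      exact WithZero.exp_ne_zero
    · have hX := valuation_X_pow K 1
      rw [pow_one] at hX
      rw [hX]
      intro h
      rw [WithZero.exp_eq_one] at h
      simp at h

/-- the valuation of a nonzero Laurent series is given by its order -/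
theorem valued_eq_order {c : LaurentSeries K} (hc : c ≠ 0) :
    (Valued.v c : (WithZero (Multiplicative ℤ))) = ((Multiplicative.ofAdd (-c.order) : Multiplicative ℤ) : (WithZero (Multiplicative ℤ))) := by
  have h1 : Valued.v c ≤ ((Multiplicative.ofAdd (-c.order) : Multiplicative ℤ) : (WithZero (Multiplicative ℤ))) :=
    (valuation_le_iff_coeff_lt_eq_zero K).mpr
      (fun n hn => HahnSeries.coeff_eq_zero_of_lt_order hn)
  have h2 : ¬ (Valued.v c ≤ ((Multiplicative.ofAdd (-(c.order + 1)) : Multiplicative ℤ) : (WithZero (Multiplicative ℤ)))) := by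
    intro H
    exact (fun h => hc (HahnSeries.coeff_order_eq_zero.mp h))
      ((valuation_le_iff_coeff_lt_eq_zero K).mp H c.order (lt_add_one _))
  have hne : Valued.v c ≠ (0 : (WithZero (Multiplicative ℤ))) := (Valuation.ne_zero_iff _).mpr hc
  obtain ⟨m, hm⟩ := WithZero.ne_zero_iff_exists.mp hne
  rw [← hm] at h1 h2 ⊢
  rw [WithZero.coe_le_coe] at h1
  rw [WithZero.coe_le_coe] at h2
  rw [WithZero.coe_inj]
  have h1' : Multiplicative.toAdd m ≤ -c.order := h1
  have h2' : ¬ (Multiplicative.toAdd m ≤ -(c.order + 1)) := h2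
  have : Multiplicative.toAdd m = -c.order := by omega
  rw [← this]
  rfl

/-- the order of the image in Laurent series of a power series of finite order -/
theorem order_coe_powerSeries {z : PowerSeries K} {n : ℕ} (hz : PowerSeries.order z = (n : ℕ∞)) :
    ((algebraMap (PowerSeries K) (LaurentSeries K)) z).order = (n : ℤ) ∧ z ≠ 0 := by
  have hz0 : z ≠ 0 := by
    rw [← PowerSeries.order_finite_iff_ne_zero, hz]
    exact WithTop.coe_lt_top n
  have hA : (algebraMap (PowerSeries K) (LaurentSeries K)) z = HahnSeries.ofPowerSeries ℤ K z := rfl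
  have hAz : (algebraMap (PowerSeries K) (LaurentSeries K)) z ≠ 0 := by
    rw [hA]
    intro h
    apply hz0
    apply HahnSeries.ofPowerSeries_injective (Γ := ℤ)
    rw [h, map_zero]
  obtain ⟨hcn, hlt⟩ := PowerSeries.order_eq_nat.mp hz
  refine ⟨?_, hz0⟩
  have hwn : ((algebraMap (PowerSeries K) (LaurentSeries K)) z).coeff (n : ℤ) ≠ 0 := by
    rw [hA, HahnSeries.ofPowerSeries_apply_coeff]
    exact hcn
  have hbelow : ∀ m : ℤ, m < (n : ℤ) →
      ((algebraMap (PowerSeries K) (LaurentSeries K)) z).coeff m = 0 := by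
    intro m hm
    rcases lt_or_ge m 0 with hm0 | hm0
    · rw [hA, HahnSeries.ofPowerSeries_apply]
      apply HahnSeries.embDomain_notin_range
      rintro ⟨k, hk⟩
      have hk' : (k : ℤ) = m := hk
      omega
    · obtain ⟨k, rfl⟩ := Int.eq_ofNat_of_zero_le hm0
      rw [hA, HahnSeries.ofPowerSeries_apply_coeff]
      exact hlt k (by exact_mod_cast hm)
  have h1 : ((algebraMap (PowerSeries K) (LaurentSeries K)) z).order ≤ (n : ℤ) := by
    by_contra h
    push_neg at h
    exact hwn (HahnSeries.coeff_eq_zero_of_lt_order h)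
  have h2 : (n : ℤ) ≤ ((algebraMap (PowerSeries K) (LaurentSeries K)) z).order := by
    by_contra h
    push_neg at h
    exact (fun h => hAz (HahnSeries.coeff_order_eq_zero.mp h)) (hbelow _ h)
  omega

end Stmt1Aux

namespace Stmt1Aux
open scoped Multiplicative
variable (K : Type*) [Field K]

theorem normLS {c : LaurentSeries K} (hc : c ≠ 0) :
    letI := rankOneLS K
    letI : NontriviallyNormedField (LaurentSeries K) := Valued.toNontriviallyNormedField (LaurentSeries K) (WithZero (Multiplicative ℤ))
    ‖c‖ = (2:ℝ) ^ (-(c.order) : ℤ) := by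
  letI := rankOneLS K
  letI : NontriviallyNormedField (LaurentSeries K) := Valued.toNontriviallyNormedField (LaurentSeries K) (WithZero (Multiplicative ℤ))
  show ‖c‖ = _
  have h0 : ‖c‖ =
      ((WithZeroMulInt.toNNReal (by norm_num : (2:NNReal) ≠ 0) (Valued.v c) : NNReal) : ℝ) := by
    rw [← Valuation.embedding_restrict]; rfl
  rw [h0, valued_eq_order K hc,
    WithZeroMulInt.toNNReal_neg_apply _ (WithZero.coe_ne_zero)]
  rw [NNReal.coe_zpow]
  congr 1

end Stmt1Aux

section ConjLemma

variable {K : Type*} [Field K]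

open IntermediateField Stmt1Aux

theorem v_eq_of_conj (v : AlgebraicClosure (LaurentSeries K) → ℚ)
    (hv_ext : ∀ a : LaurentSeries K, a ≠ 0 →
      v (algebraMap (LaurentSeries K) (AlgebraicClosure (LaurentSeries K)) a) = (a.order : ℚ))
    (hv_mul : ∀ a b : AlgebraicClosure (LaurentSeries K),
      a ≠ 0 → b ≠ 0 → v (a * b) = v a + v b)
    (hv_add : ∀ a b : AlgebraicClosure (LaurentSeries K),
      a ≠ 0 → b ≠ 0 → a + b ≠ 0 → min (v a) (v b) ≤ v (a + b))
    {P : Polynomial (LaurentSeries K)} (hPirr : Irreducible P) (hPm : P.Monic)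
    {r₁ r₂ : AlgebraicClosure (LaurentSeries K)}
    (h1 : Polynomial.aeval r₁ P = 0) (h2 : Polynomial.aeval r₂ P = 0)
    (hr1 : r₁ ≠ 0) (hr2 : r₂ ≠ 0) : v r₁ = v r₂ := by
  letI := rankOneLS K
  letI : NontriviallyNormedField (LaurentSeries K) := Valued.toNontriviallyNormedField (LaurentSeries K) (WithZero (Multiplicative ℤ))
  have hnorm : ∀ c : LaurentSeries K, c ≠ 0 → ‖c‖ = (2:ℝ) ^ (-(c.order) : ℤ) :=
    fun c hc => normLS K hc
  have hja : ∀ c : LaurentSeries K, c ≠ 0 →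
      algebraMap (LaurentSeries K) (AlgebraicClosure (LaurentSeries K)) c ≠ 0 := by
    intro c hc h
    exact hc ((algebraMap (LaurentSeries K) (AlgebraicClosure (LaurentSeries K))).injective
      (by rw [h, map_zero]))
  set av := mkAbs v hv_mul hv_add with hav
  have hav_alg : ∀ c : LaurentSeries K,
      av (algebraMap (LaurentSeries K) (AlgebraicClosure (LaurentSeries K)) c) = ‖c‖ := by
    intro c
    rcases eq_or_ne c 0 with rfl | hc
    · rw [map_zero, map_zero, norm_zero]
    · rw [mkAbs_apply v hv_mul hv_add (hja c hc), hv_ext c hc, hnorm c hc,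
        ← Real.rpow_intCast 2 (-c.order)]
      norm_num
  have hint : IsIntegral (LaurentSeries K) r₁ := ⟨P, hPm, by rwa [← aeval_def]⟩
  haveI := IntermediateField.adjoin.finiteDimensional hint
  have hmin : minpoly (LaurentSeries K) r₁ = P :=
    (minpoly.eq_of_irreducible_of_monic hPirr h1 hPm).symm
  have hroots : r₂ ∈ (minpoly (LaurentSeries K) r₁).aroots (AlgebraicClosure (LaurentSeries K)) := by
    rw [hmin, aroots_def, Polynomial.mem_roots']
    refine ⟨(hPm.map _).ne_zero, ?_⟩
    rw [IsRoot.def, eval_map, ← aeval_def, h2]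
  let ψ := (IntermediateField.algHomAdjoinIntegralEquiv (LaurentSeries K)
    (K := AlgebraicClosure (LaurentSeries K)) hint).symm ⟨r₂, hroots⟩
  have hψ : ψ (IntermediateField.AdjoinSimple.gen (LaurentSeries K) r₁) = r₂ :=
    IntermediateField.algHomAdjoinIntegralEquiv_symm_apply_gen (LaurentSeries K) hint ⟨r₂, hroots⟩
  let f : AbsoluteValue ((LaurentSeries K)⟮r₁⟯) ℝ :=
    av.comp (f := algebraMap ((LaurentSeries K)⟮r₁⟯) (AlgebraicClosure (LaurentSeries K)))
      (RingHom.injective _)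
  let g : AbsoluteValue ((LaurentSeries K)⟮r₁⟯) ℝ :=
    av.comp (f := ψ.toRingHom) (RingHom.injective _)
  have hf : ∀ c : LaurentSeries K,
      f (algebraMap (LaurentSeries K) ((LaurentSeries K)⟮r₁⟯) c) = ‖c‖ := by
    intro c
    show av (algebraMap ((LaurentSeries K)⟮r₁⟯) (AlgebraicClosure (LaurentSeries K))
      (algebraMap (LaurentSeries K) ((LaurentSeries K)⟮r₁⟯) c)) = ‖c‖
    rw [← IsScalarTower.algebraMap_apply]
    exact hav_alg c
  have hg : ∀ c : LaurentSeries K,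
      g (algebraMap (LaurentSeries K) ((LaurentSeries K)⟮r₁⟯) c) = ‖c‖ := by
    intro c
    show av (ψ (algebraMap (LaurentSeries K) ((LaurentSeries K)⟮r₁⟯) c)) = ‖c‖
    rw [AlgHom.commutes]
    exact hav_alg c
  have hkey := absval_eq_of_finiteDimensional f g hf hg
    (IntermediateField.AdjoinSimple.gen (LaurentSeries K) r₁)
  have hfgen : f (IntermediateField.AdjoinSimple.gen (LaurentSeries K) r₁) = av r₁ := by
    show av (algebraMap ((LaurentSeries K)⟮r₁⟯) (AlgebraicClosure (LaurentSeries K))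
      (IntermediateField.AdjoinSimple.gen (LaurentSeries K) r₁)) = av r₁
    rw [IntermediateField.AdjoinSimple.algebraMap_gen]
  have hggen : g (IntermediateField.AdjoinSimple.gen (LaurentSeries K) r₁) = av r₂ := by
    show av (ψ (IntermediateField.AdjoinSimple.gen (LaurentSeries K) r₁)) = av r₂
    rw [hψ]
  rw [hfgen, hggen] at hkey
  exact (mkAbs_eq_iff v hv_mul hv_add hr1 hr2).mp hkey

end ConjLemma

/-- Let `𝓕 ∈ K[[x]][y]` be irreducible of degree `d ≥ 1` in `y`, let `a` be the
`x`-adic valuation of its leading coefficient and `b` that of its constant coefficient. Then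
`a = 0` or `b = 0`, and every root `φ` of `𝓕` in the algebraic closure `Ω` of `K((x))` satisfies
`v(φ) = (b − a)/d`, where `v` is the unique extension of the `x`-adic valuation of `K((x))`
to `Ω` (characterized by extending the valuation and being additive on products). -/
theorem stmt1 {K : Type*} [Field K]
    (v : AlgebraicClosure (LaurentSeries K) → ℚ)
    (hv_ext : ∀ a : LaurentSeries K, a ≠ 0 →
      v (algebraMap (LaurentSeries K) (AlgebraicClosure (LaurentSeries K)) a) = (a.order : ℚ))
    (hv_mul : ∀ a b : AlgebraicClosure (LaurentSeries K),
      a ≠ 0 → b ≠ 0 → v (a * b) = v a + v b)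
    (hv_add : ∀ a b : AlgebraicClosure (LaurentSeries K),
      a ≠ 0 → b ≠ 0 → a + b ≠ 0 → min (v a) (v b) ≤ v (a + b))
    (𝓕 : Polynomial (PowerSeries K)) (d : ℕ) (hd : 𝓕.natDegree = d) (hd1 : 1 ≤ d)
    (hirr : Irreducible 𝓕)
    (a b : ℕ)
    (ha : PowerSeries.order 𝓕.leadingCoeff = (a : ℕ∞))
    (hb : PowerSeries.order (𝓕.coeff 0) = (b : ℕ∞)) :
    (a = 0 ∨ b = 0) ∧
      ∀ φ : AlgebraicClosure (LaurentSeries K),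
        Polynomial.aeval φ (𝓕.map (algebraMap (PowerSeries K) (LaurentSeries K))) = 0 →
          v φ = ((b : ℚ) - (a : ℚ)) / (d : ℚ) := by
  classical
  have hAinj : Function.Injective (algebraMap (PowerSeries K) (LaurentSeries K)) :=
    IsFractionRing.injective _ _
  have hjinj : Function.Injective
      (algebraMap (LaurentSeries K) (AlgebraicClosure (LaurentSeries K))) :=
    (algebraMap (LaurentSeries K) (AlgebraicClosure (LaurentSeries K))).injective
  have h𝓕0 : 𝓕 ≠ 0 := hirr.ne_zero
  set G := 𝓕.map (algebraMap (PowerSeries K) (LaurentSeries K)) with hGdef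
  have hG0 : G ≠ 0 := by
    rw [hGdef, Ne, Polynomial.map_eq_zero_iff hAinj]
    exact h𝓕0
  have hGdeg : G.natDegree = d := by
    rw [hGdef, Polynomial.natDegree_map_eq_of_injective hAinj, hd]
  -- primitivity of 𝓕
  have hprim : 𝓕.IsPrimitive := by
    intro r hr
    rcases hr with ⟨q, hq⟩
    rcases hirr.isUnit_or_isUnit hq with h | h
    · exact Polynomial.isUnit_C.mp h
    · exfalso
      have hq0 : q.natDegree = 0 := Polynomial.natDegree_eq_zero_of_isUnit h
      have hle : 𝓕.natDegree ≤ 0 := by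
        rw [hq]
        refine le_trans (Polynomial.natDegree_mul_le) ?_
        simp [hq0]
      omega
  -- Gauss's lemma
  have hGirr : Irreducible G := by
    letI := UniqueFactorizationMonoid.normalizationMonoid (α := PowerSeries K)
    letI := UniqueFactorizationMonoid.toNormalizedGCDMonoid (PowerSeries K)
    exact (Polynomial.IsPrimitive.irreducible_iff_irreducible_map_fraction_map hprim).mp hirr
  -- leading coefficient bookkeeping
  have hlc0 : 𝓕.leadingCoeff ≠ 0 := Polynomial.leadingCoeff_ne_zero.mpr h𝓕0
  have hAlc0 : (algebraMap (PowerSeries K) (LaurentSeries K)) 𝓕.leadingCoeff ≠ 0 := by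
    intro h; exact hlc0 (hAinj (by rw [h, map_zero]))
  have hlcG : G.leadingCoeff = (algebraMap (PowerSeries K) (LaurentSeries K)) 𝓕.leadingCoeff := by
    rw [hGdef]
    exact Polynomial.leadingCoeff_map_of_leadingCoeff_ne_zero _ hAlc0
  have hlcG0 : G.leadingCoeff ≠ 0 := by rw [hlcG]; exact hAlc0
  set P := G * Polynomial.C (G.leadingCoeff)⁻¹ with hPdef
  have hPm : P.Monic := Polynomial.monic_mul_leadingCoeff_inv hG0
  have hPirr : Irreducible P := by
    obtain ⟨w, hw⟩ := Polynomial.isUnit_C.mpr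
      ((Units.mk0 (G.leadingCoeff)⁻¹ (inv_ne_zero hlcG0)).isUnit)
    exact Associated.irreducible ⟨w, by rw [hw, Units.val_mk0]⟩ hGirr
  set jΩ := algebraMap (LaurentSeries K) (AlgebraicClosure (LaurentSeries K)) with hjdef
  set Q := P.map jΩ with hQdef
  have hQm : Q.Monic := hPm.map _
  have hQdeg : Q.natDegree = d := by
    rw [hQdef, hPm.natDegree_map, hPdef, Polynomial.natDegree_mul hG0 (by
      simp only [Ne, Polynomial.C_eq_zero]
      exact inv_ne_zero hlcG0), Polynomial.natDegree_C, add_zero, hGdeg]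
  have hQ0 : Q ≠ 0 := hQm.ne_zero
  have hQsplits : Q.Splits :=
    IsAlgClosed.splits Q
  have hcard : Multiset.card Q.roots = d := by
    rw [Polynomial.splits_iff_card_roots.mp hQsplits, hQdeg]
  -- the valuation of coefficients coming from power series
  have hvcoeff : ∀ (z : PowerSeries K) (n : ℕ), PowerSeries.order z = (n : ℕ∞) →
      jΩ ((algebraMap (PowerSeries K) (LaurentSeries K)) z) ≠ 0 ∧
        v (jΩ ((algebraMap (PowerSeries K) (LaurentSeries K)) z)) = (n : ℚ) := by
    intro z n hz
    obtain ⟨hord, hz0⟩ := Stmt1Aux.order_coe_powerSeries K hz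
    have hA0 : (algebraMap (PowerSeries K) (LaurentSeries K)) z ≠ 0 := by
      intro h; exact hz0 (hAinj (by rw [h, map_zero]))
    have hj0 : jΩ ((algebraMap (PowerSeries K) (LaurentSeries K)) z) ≠ 0 := by
      intro h; exact hA0 (hjinj (by rw [h, map_zero]))
    refine ⟨hj0, ?_⟩
    rw [hjdef, hv_ext _ hA0, hord]
    norm_num
  obtain ⟨hjlc0, hvjlc⟩ := hvcoeff 𝓕.leadingCoeff a ha
  obtain ⟨hjc00, hvjc0⟩ := hvcoeff (𝓕.coeff 0) b hb
  -- coefficients of Q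
  have hGcoeff : ∀ i : ℕ, G.coeff i = (algebraMap (PowerSeries K) (LaurentSeries K)) (𝓕.coeff i) :=
    fun i => by rw [hGdef, Polynomial.coeff_map]
  have hQcoeff : ∀ i : ℕ, Q.coeff i = jΩ (G.coeff i) * (jΩ G.leadingCoeff)⁻¹ := by
    intro i
    rw [hQdef, Polynomial.coeff_map, hPdef, Polynomial.coeff_mul_C, map_mul, map_inv₀]
  have hjlc : jΩ G.leadingCoeff = jΩ ((algebraMap (PowerSeries K) (LaurentSeries K)) 𝓕.leadingCoeff) := by
    rw [hlcG]
  have hvinvlc : v ((jΩ G.leadingCoeff)⁻¹) = -(a:ℚ) := by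
    rw [hjlc, v_inv' v hv_mul hjlc0, hvjlc]
  have hinvlc0 : (jΩ G.leadingCoeff)⁻¹ ≠ 0 := by
    rw [hjlc]; exact inv_ne_zero hjlc0
  -- v of a nonzero coefficient of Q whose power-series order is n
  have hvQcoeff : ∀ (i : ℕ) (n : ℕ), PowerSeries.order (𝓕.coeff i) = (n : ℕ∞) →
      Q.coeff i ≠ 0 ∧ v (Q.coeff i) = (n : ℚ) - (a : ℚ) := by
    intro i n hn
    obtain ⟨hj0, hvj⟩ := hvcoeff (𝓕.coeff i) n hn
    have h1 : Q.coeff i = jΩ ((algebraMap (PowerSeries K) (LaurentSeries K)) (𝓕.coeff i)) *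
        (jΩ G.leadingCoeff)⁻¹ := by rw [hQcoeff i, hGcoeff i]
    constructor
    · rw [h1]; exact mul_ne_zero hj0 hinvlc0
    · rw [h1, hv_mul _ _ hj0 hinvlc0, hvj, hvinvlc]
      ring
  -- the roots of Q are nonzero
  obtain ⟨hQc00, hvQc0⟩ := hvQcoeff 0 b hb
  have haev : ∀ r ∈ Q.roots, Polynomial.aeval r P = 0 := by
    intro r hr
    have h2 := (Polynomial.mem_roots'.mp hr).2
    rwa [Polynomial.IsRoot.def, hQdef, Polynomial.eval_map, ← Polynomial.aeval_def] at h2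
  have hroots_ne : ∀ r ∈ Q.roots, r ≠ 0 := by
    intro r hr h0
    have h2 := (Polynomial.mem_roots'.mp hr).2
    rw [h0, Polynomial.IsRoot.def, ← Polynomial.coeff_zero_eq_eval_zero] at h2
    exact hQc00 h2
  -- all roots have the same v
  have hsame : ∀ r ∈ Q.roots, ∀ r' ∈ Q.roots, v r = v r' := by
    intro r hr r' hr'
    exact v_eq_of_conj v hv_ext hv_mul hv_add hPirr hPm (haev r hr) (haev r' hr')
      (hroots_ne r hr) (hroots_ne r' hr')
  -- pick a root
  have hdpos : 0 < d := hd1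
  obtain ⟨r₀, hr₀⟩ := Multiset.card_pos_iff_exists_mem.mp (by rw [hcard]; exact hdpos)
  set t := v r₀ with htdef
  have hmapv : Q.roots.map v = Multiset.replicate d t := by
    rw [Multiset.eq_replicate]
    constructor
    · rw [Multiset.card_map, hcard]
    · intro q hq
      obtain ⟨r, hr, rfl⟩ := Multiset.mem_map.mp hq
      exact hsame r hr r₀ hr₀
  -- Vieta
  have hprod : Q.coeff 0 = (-1) ^ d * Q.roots.prod := by
    have := hQsplits.coeff_zero_eq_prod_roots_of_monic hQm
    rwa [hQdeg] at this
  have hvprod : v Q.roots.prod = (d : ℚ) * t := by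
    rw [v_prod' v hv_mul _ hroots_ne, hmapv, Multiset.sum_replicate, nsmul_eq_mul]
  have hvQc0' : v Q.roots.prod = v (Q.coeff 0) := by
    rcases neg_one_pow_eq_or (AlgebraicClosure (LaurentSeries K)) d with h | h
    · rw [hprod, h, one_mul]
    · rw [hprod, h, neg_one_mul, v_neg' v hv_mul]
      intro hc
      exact hQc00 (by rw [hprod, h, neg_one_mul, hc, neg_zero])
  have ht : t = ((b : ℚ) - (a : ℚ)) / (d : ℚ) := by
    have hd0 : (d : ℚ) ≠ 0 := by positivity
    have h2 : (d : ℚ) * t = (b : ℚ) - (a : ℚ) := by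
      rw [← hvprod, hvQc0', hvQc0]
    rw [eq_div_iff hd0]
    linarith [h2]
  have hkey : ∀ r ∈ Q.roots, v r = ((b : ℚ) - (a : ℚ)) / (d : ℚ) := by
    intro r hr
    rw [hsame r hr r₀ hr₀, ← htdef, ht]
  -- membership of any given root
  have hmem : ∀ φ : AlgebraicClosure (LaurentSeries K),
      Polynomial.aeval φ (𝓕.map (algebraMap (PowerSeries K) (LaurentSeries K))) = 0 →
        φ ∈ Q.roots := by
    intro φ hφ
    have hφ' : Polynomial.aeval φ P = 0 := by
      rw [hPdef, map_mul]
      rw [← hGdef] at hφ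
      rw [hφ, zero_mul]
    rw [Polynomial.mem_roots']
    refine ⟨hQ0, ?_⟩
    rw [Polynomial.IsRoot.def, hQdef, Polynomial.eval_map, ← Polynomial.aeval_def, hφ']
  constructor
  · -- a = 0 ∨ b = 0, via primitivity and the ultrametric bound on esymm
    have hXnu : ¬ IsUnit (PowerSeries.X : PowerSeries K) := by
      intro h
      have h2 := h.map (PowerSeries.constantCoeff (R := K))
      rw [PowerSeries.constantCoeff_X] at h2
      exact not_isUnit_zero h2
    have hnd : ¬ (Polynomial.C (PowerSeries.X : PowerSeries K) ∣ 𝓕) := fun hdvd =>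
      hXnu (hprim _ hdvd)
    obtain ⟨i, hi⟩ : ∃ i, ¬ ((PowerSeries.X : PowerSeries K) ∣ 𝓕.coeff i) := by
      by_contra h
      push_neg at h
      exact hnd ((Polynomial.C_dvd_iff_dvd_coeff _ _).mpr h)
    have hci0 : 𝓕.coeff i ≠ 0 := fun h => hi (h ▸ dvd_zero _)
    have hile : i ≤ d := by
      by_contra h
      push_neg at h
      exact hci0 (Polynomial.coeff_eq_zero_of_natDegree_lt (by omega))
    have hordi : PowerSeries.order (𝓕.coeff i) = ((0 : ℕ) : ℕ∞) := by
      rw [PowerSeries.order_eq_nat]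
      refine ⟨?_, fun j hj => absurd hj (by omega)⟩
      rw [PowerSeries.coeff_zero_eq_constantCoeff]
      exact fun h => hi (PowerSeries.X_dvd_iff.mpr h)
    obtain ⟨hQci0, hvQci⟩ := hvQcoeff i 0 hordi
    -- esymm bound
    have hesymm := Polynomial.coeff_eq_esymm_roots_of_card
      (by rw [hcard, hQdeg] : Multiset.card Q.roots = Q.natDegree)
      (by rw [hQdeg]; exact hile : i ≤ Q.natDegree)
    rw [hQm.leadingCoeff, one_mul, hQdeg] at hesymm
    obtain ⟨k, hkdef⟩ : ∃ k, k = d - i := ⟨_, rfl⟩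
    rw [← hkdef] at hesymm
    -- each term of esymm has valuation (k : ℚ) * t
    have hterm : ∀ z ∈ (Multiset.map Multiset.prod (Q.roots.powersetCard k)),
        z ≠ 0 ∧ (k : ℚ) * (((b : ℚ) - (a : ℚ)) / (d : ℚ)) ≤ v z := by
      intro z hz
      obtain ⟨T, hT, rfl⟩ := Multiset.mem_map.mp hz
      obtain ⟨hTle, hTcard⟩ := Multiset.mem_powersetCard.mp hT
      have hTmem : ∀ x ∈ T, x ∈ Q.roots := fun x hx => Multiset.mem_of_le hTle hx
      have hTne : ∀ x ∈ T, x ≠ 0 := fun x hx => hroots_ne x (hTmem x hx)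
      constructor
      · exact Multiset.prod_ne_zero (fun h => hTne 0 h rfl)
      · rw [v_prod' v hv_mul T hTne]
        have : T.map v = Multiset.replicate k (((b : ℚ) - (a : ℚ)) / (d : ℚ)) := by
          rw [Multiset.eq_replicate]
          refine ⟨by rw [Multiset.card_map, hTcard], ?_⟩
          intro q hq
          obtain ⟨x, hx, rfl⟩ := Multiset.mem_map.mp hq
          exact hkey x (hTmem x hx)
        rw [this, Multiset.sum_replicate, nsmul_eq_mul]
    have hesne : Q.roots.esymm k ≠ 0 := by
      intro h
      rw [h, mul_zero] at hesymm
      exact hQci0 hesymm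
    have hbound : (k : ℚ) * (((b : ℚ) - (a : ℚ)) / (d : ℚ)) ≤ v (Q.roots.esymm k) := by
      have := v_sum_ge' v hv_mul hv_add ((k : ℚ) * (((b : ℚ) - (a : ℚ)) / (d : ℚ)))
        (Multiset.map Multiset.prod (Q.roots.powersetCard k)) hterm
      rcases this with h | h
      · exact absurd h hesne
      · exact h
    have hvesymm : v (Q.roots.esymm k) = -(a : ℚ) := by
      rcases neg_one_pow_eq_or (AlgebraicClosure (LaurentSeries K)) k with h | h
      · rw [h, one_mul] at hesymm
        rw [← hesymm, hvQci]
        norm_num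
      · rw [h, neg_one_mul] at hesymm
        have hQcieq : Q.roots.esymm k = - Q.coeff i := by rw [hesymm, neg_neg]
        rw [hQcieq, v_neg' v hv_mul hQci0, hvQci]
        norm_num
    -- conclude
    rw [hvesymm] at hbound
    have hkc : (k : ℚ) = (d : ℚ) - (i : ℚ) := by
      rw [hkdef]
      push_cast [Nat.cast_sub hile]
      ring
    have hd0 : (0:ℚ) < (d:ℚ) := by positivity
    have hineq : ((d : ℚ) - (i : ℚ)) * ((b : ℚ) - (a : ℚ)) ≤ -(a:ℚ) * d := by
      rw [hkc] at hbound
      rw [← mul_div_assoc, div_le_iff₀ hd0] at hbound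
      exact hbound
    have hnat : (k * b + i * a : ℕ) = 0 := by
      have h1 : ((k * b + i * a : ℕ) : ℚ) ≤ 0 := by
        push_cast
        rw [hkc]
        linarith [hineq]
      have h2 : (0:ℚ) ≤ ((k * b + i * a : ℕ) : ℚ) := by positivity
      exact_mod_cast le_antisymm h1 h2
    have hkb : k * b = 0 ∧ i * a = 0 := by omega
    rcases Nat.mul_eq_zero.mp hkb.1 with hk0 | hb0
    · -- k = 0, so i = d, so i ≠ 0, so a = 0
      left
      have : i = d := by omega
      rcases Nat.mul_eq_zero.mp hkb.2 with hi0 | ha0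
      · omega
      · exact ha0
    · exact Or.inr hb0
  · intro φ hφ
    exact hkey φ (hmem φ hφ)
end
end

section
/- Let L be a field with K ⊆ L ⊆ (algebraic closure of K((x))), let F ∈ K[x,y] be separable in y of y-degree d_y with roots y₁,…,y_{d_y} in the algebraic closure of K(x), and let G ∈ K[x,y] with deg_y G < d_y. Then the residues ρ_k := G(x,y_k)/∂_yF(x,y_k) all lie in L if and only if G is an L-linear combination of the polynomials (F/E_j)·∂_y E_j, where E₁,…,E_ℓ are the irreducible factors of F over L. -/
open Polynomial Finset

noncomputable section

private theorem myder5 {R ι : Type*} [CommRing R] [DecidableEq ι] (s : Finset ι) (f : ι → R[X]) :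
    derivative (∏ j ∈ s, f j) = ∑ j ∈ s, (∏ k ∈ s.erase j, f k) * derivative (f j) := by
  classical
  induction s using Finset.induction_on with
  | empty => simp
  | insert a s hx ih =>
    have h2 : ∑ j ∈ s, (∏ k ∈ (insert a s).erase j, f k) * derivative (f j)
        = f a * ∑ j ∈ s, (∏ k ∈ s.erase j, f k) * derivative (f j) := by
      rw [Finset.mul_sum]
      refine Finset.sum_congr rfl fun j hj => ?_
      have hja : j ≠ a := fun h => hx (h ▸ hj)
      rw [Finset.erase_insert_of_ne hja.symm,
        Finset.prod_insert (fun h => hx (Finset.erase_subset _ _ h))]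
      ring
    rw [Finset.prod_insert hx, derivative_mul, ih, Finset.sum_insert hx,
      Finset.erase_insert hx, h2]
    ring

/-- **key residue lemma.** Let `K ⊆ L` be fields, `F ∈ K[x,y]` separable in `y` of
`y`-degree `d_y` and `G ∈ K[x,y]` with `deg_y G < d_y`.  Let `E₁,…,E_ℓ` be the monic irreducible
factors of `F` over `L(x)` (so `F = c₀·E₁⋯E_ℓ`).  Then the residues
`ρ_φ = G(x,φ)/∂_yF(x,φ)` at all roots `φ` of `F` (in an algebraic closure `Ω` of `L(x)`) all
lie in `L` if and only if `G` is an `L`-linear combination of the `(F/E_j)·∂_y E_j`. -/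
theorem stmt5 {K L : Type*} [Field K] [Field L] [Algebra K L]
    (F G : Polynomial (Polynomial K)) (dy : ℕ) (hdy : F.natDegree = dy)
    (hdegG : G.natDegree < dy)
    (hsep : (F.map ((algebraMap (Polynomial L) (RatFunc L)).comp
        (Polynomial.mapRingHom (algebraMap K L)))).Separable)
    (ℓ : ℕ) (c₀ : RatFunc L) (E : Fin ℓ → Polynomial (RatFunc L))
    (hE : F.map ((algebraMap (Polynomial L) (RatFunc L)).comp
        (Polynomial.mapRingHom (algebraMap K L))) = Polynomial.C c₀ * ∏ j, E j)
    (hEirr : ∀ j, Irreducible (E j)) (hEmonic : ∀ j, (E j).Monic) :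
    (∀ φ : AlgebraicClosure (RatFunc L),
        Polynomial.eval φ (F.map ((algebraMap (RatFunc L) (AlgebraicClosure (RatFunc L))).comp
            ((algebraMap (Polynomial L) (RatFunc L)).comp
              (Polynomial.mapRingHom (algebraMap K L))))) = 0 →
        Polynomial.eval φ (G.map ((algebraMap (RatFunc L) (AlgebraicClosure (RatFunc L))).comp
            ((algebraMap (Polynomial L) (RatFunc L)).comp
              (Polynomial.mapRingHom (algebraMap K L))))) /
          Polynomial.eval φ (derivative (F.map
            ((algebraMap (RatFunc L) (AlgebraicClosure (RatFunc L))).comp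
              ((algebraMap (Polynomial L) (RatFunc L)).comp
                (Polynomial.mapRingHom (algebraMap K L)))))) ∈
          Set.range (fun c : L =>
            algebraMap (RatFunc L) (AlgebraicClosure (RatFunc L))
              (algebraMap L (RatFunc L) c)))
      ↔
    (∃ c : Fin ℓ → L,
        G.map ((algebraMap (Polynomial L) (RatFunc L)).comp
            (Polynomial.mapRingHom (algebraMap K L))) =
          ∑ j, Polynomial.C (algebraMap L (RatFunc L) (c j)) *
            ((Polynomial.C c₀ * ∏ k ∈ Finset.univ.erase j, E k) * derivative (E j))) := by
  classical
  set ψ : Polynomial K →+* RatFunc L :=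
    (algebraMap (Polynomial L) (RatFunc L)).comp (Polynomial.mapRingHom (algebraMap K L)) with hψ
  set ι : RatFunc L →+* AlgebraicClosure (RatFunc L)
    := algebraMap (RatFunc L) (AlgebraicClosure (RatFunc L)) with hι
  set FL : (RatFunc L)[X] := F.map ψ with hFL
  set Gm : (RatFunc L)[X] := G.map ψ with hGm
  have hmapF : F.map (ι.comp ψ) = FL.map ι := by rw [hFL, Polynomial.map_map]
  have hmapG : G.map (ι.comp ψ) = Gm.map ι := by rw [hGm, Polynomial.map_map]
  have hevalF : ∀ φ : AlgebraicClosure (RatFunc L),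
      Polynomial.eval φ (F.map (ι.comp ψ)) = aeval φ FL := by
    intro φ; rw [hmapF, aeval_def, eval_map]
  have hevalG : ∀ φ : AlgebraicClosure (RatFunc L),
      Polynomial.eval φ (G.map (ι.comp ψ)) = aeval φ Gm := by
    intro φ; rw [hmapG, aeval_def, eval_map]
  have hevalF' : ∀ φ : AlgebraicClosure (RatFunc L),
      Polynomial.eval φ (derivative (F.map (ι.comp ψ))) = aeval φ (derivative FL) := by
    intro φ; rw [hmapF, derivative_map, aeval_def, eval_map]
  have hdy1 : 1 ≤ dy := Nat.lt_of_le_of_lt (Nat.zero_le _) hdegG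
  have hψinj : Function.Injective ψ := by
    refine (IsFractionRing.injective (Polynomial L) (RatFunc L)).comp ?_
    exact Polynomial.map_injective _ (algebraMap K L).injective
  have hFL0 : FL ≠ 0 := by
    intro h
    have hF : F = 0 := (Polynomial.map_eq_zero_iff hψinj).mp h
    rw [hF] at hdy; simp at hdy; omega
  have hdegFL : FL.natDegree = dy := by
    rw [hFL, Polynomial.natDegree_map_eq_of_injective hψinj, hdy]
  have hc₀ : c₀ ≠ 0 := by
    intro h; rw [hE, h] at hFL0; simp at hFL0
  set T : Fin ℓ → (RatFunc L)[X] :=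
    fun j => (Polynomial.C c₀ * ∏ k ∈ Finset.univ.erase j, E k) * derivative (E j) with hT
  have hder : derivative FL = ∑ j, T j := by
    rw [hE, derivative_mul, derivative_C, zero_mul, zero_add, myder5, Finset.mul_sum]
    refine Finset.sum_congr rfl fun j _ => ?_
    rw [hT]; ring
  have hEdeg : ∀ j, 1 ≤ (E j).natDegree := fun j => (hEirr j).natDegree_pos
  have hsum_deg : ∑ j, (E j).natDegree = dy := by
    have h1 : FL.natDegree = (∑ j, (E j).natDegree) := by
      rw [hE, natDegree_mul (by simpa using hc₀)
        (Finset.prod_ne_zero_iff.mpr fun j _ => (hEirr j).ne_zero), natDegree_C, zero_add,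
        natDegree_prod _ _ fun j _ => (hEirr j).ne_zero]
    omega
  have hdegT : ∀ j, (T j).natDegree < dy := by
    intro j
    have h3 := Finset.sum_erase_add Finset.univ (fun k => (E k).natDegree) (Finset.mem_univ j)
    have hjd : (E j).natDegree ≤ dy := by
      rw [← hsum_deg]
      exact Finset.single_le_sum (f := fun k => (E k).natDegree) (fun k _ => Nat.zero_le _) (Finset.mem_univ j)
    have h1 : (∏ k ∈ Finset.univ.erase j, E k).natDegree ≤ dy - (E j).natDegree := by
      refine le_trans (natDegree_prod_le _ _) ?_
      omega
    have h2 : (derivative (E j)).natDegree < (E j).natDegree :=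
      natDegree_derivative_lt (by have := hEdeg j; omega)
    have h4 := natDegree_mul_le (p := Polynomial.C c₀ * ∏ k ∈ Finset.univ.erase j, E k)
      (q := derivative (E j))
    have h5 := natDegree_mul_le (p := Polynomial.C c₀)
      (q := ∏ k ∈ Finset.univ.erase j, E k)
    have h6 : (Polynomial.C c₀).natDegree = 0 := natDegree_C _
    have := hEdeg j
    simp only [hT]
    omega
  have hcop : IsCoprime FL (derivative FL) := hsep
  have hder_ne : ∀ φ : AlgebraicClosure (RatFunc L),
      aeval φ FL = 0 → aeval φ (derivative FL) ≠ 0 := by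
    intro φ h0 hd
    obtain ⟨u, v, huv⟩ := hcop
    have h2 := congrArg (aeval φ) huv
    rw [map_add, map_mul, map_mul, h0, hd, mul_zero, mul_zero, add_zero, map_one] at h2
    exact zero_ne_one h2
  have hTzero : ∀ (φ : AlgebraicClosure (RatFunc L)) (j k : Fin ℓ),
      aeval φ (E j) = 0 → k ≠ j → aeval φ (T k) = 0 := by
    intro φ j k hj hkj
    rw [hT]
    simp only [map_mul]
    have hz : aeval φ (∏ m ∈ Finset.univ.erase k, E m) = 0 := by
      rw [map_prod]
      exact Finset.prod_eq_zero
        (Finset.mem_erase.mpr ⟨fun h => hkj h.symm, Finset.mem_univ j⟩) hj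
    rw [hz]; ring
  have hderT : ∀ (φ : AlgebraicClosure (RatFunc L)) (j : Fin ℓ), aeval φ (E j) = 0 →
      aeval φ (derivative FL) = aeval φ (T j) := by
    intro φ j hj
    rw [hder, map_sum, Finset.sum_eq_single j]
    · intro k _ hk; exact hTzero φ j k hj hk
    · intro h; exact absurd (Finset.mem_univ j) h
  have hrootE : ∀ φ : AlgebraicClosure (RatFunc L),
      aeval φ FL = 0 → ∃ j, aeval φ (E j) = 0 := by
    intro φ h0
    rw [hE] at h0
    simp only [map_mul, map_prod, aeval_C] at h0
    rcases mul_eq_zero.mp h0 with h | h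
    · exact absurd h ((map_ne_zero_iff ι ι.injective).mpr hc₀)
    · obtain ⟨j, _, hj⟩ := Finset.prod_eq_zero_iff.mp h
      exact ⟨j, hj⟩
  constructor
  · -- forward
    intro h
    have key : ∀ j : Fin ℓ, ∃ cj : L,
        (E j) ∣ (Gm - Polynomial.C (algebraMap L (RatFunc L) cj) * derivative FL) := by
      intro j
      obtain ⟨φ, hφ⟩ := IsAlgClosed.exists_aeval_eq_zero (AlgebraicClosure (RatFunc L)) (E j)
        (by
          have h1 := hEdeg j
          intro hdeg
          rw [Polynomial.degree_eq_natDegree (hEirr j).ne_zero] at hdeg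
          simp at hdeg; omega)
      have hφF : aeval φ FL = 0 := by
        rw [hE]; simp only [map_mul, map_prod]
        rw [Finset.prod_eq_zero (Finset.mem_univ j) hφ]; ring
      obtain ⟨cj, hcj⟩ := h φ (by rw [hevalF]; exact hφF)
      rw [hevalG, hevalF'] at hcj
      simp only at hcj
      rw [eq_div_iff (hder_ne φ hφF)] at hcj
      refine ⟨cj, ?_⟩
      have hmin : minpoly (RatFunc L) φ = E j :=
        (minpoly.eq_of_irreducible_of_monic (hEirr j) hφ (hEmonic j)).symm
      have haval : aeval φ (Gm - Polynomial.C (algebraMap L (RatFunc L) cj) * derivative FL)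
          = 0 := by
        simp only [map_sub, map_mul, aeval_C]
        rw [← hcj]; ring
      rw [← hmin]
      exact minpoly.dvd (RatFunc L) φ haval
    choose c hc using key
    refine ⟨c, ?_⟩
    have hDroot : ∀ φ : AlgebraicClosure (RatFunc L), aeval φ FL = 0 →
        aeval φ (Gm - ∑ j, Polynomial.C (algebraMap L (RatFunc L) (c j)) * T j) = 0 := by
      intro φ h0
      obtain ⟨j, hj⟩ := hrootE φ h0
      have hGval : aeval φ Gm
          = ι (algebraMap L (RatFunc L) (c j)) * aeval φ (derivative FL) := by
        obtain ⟨Q, hQ⟩ := hc j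
        have h5 := congrArg (aeval φ) hQ
        simp only [map_sub, map_mul, aeval_C, hj, zero_mul] at h5
        linear_combination h5
      have hsum : aeval φ (∑ k, Polynomial.C (algebraMap L (RatFunc L) (c k)) * T k)
          = ι (algebraMap L (RatFunc L) (c j)) * aeval φ (T j) := by
        rw [map_sum, Finset.sum_eq_single j]
        · rw [map_mul, aeval_C]
        · intro k _ hk; rw [map_mul, hTzero φ j k hj hk, mul_zero]
        · intro hh; exact absurd (Finset.mem_univ j) hh
      rw [map_sub, hGval, hsum, hderT φ j hj, sub_self]
    have hDdeg : (Gm - ∑ j, Polynomial.C (algebraMap L (RatFunc L) (c j)) * T j).natDegree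
        < dy := by
      have h1 : Gm.natDegree < dy := lt_of_le_of_lt (natDegree_map_le) hdegG
      have h2 : (∑ j, Polynomial.C (algebraMap L (RatFunc L) (c j)) * T j).natDegree < dy := by
        refine lt_of_le_of_lt (natDegree_sum_le _ _) ?_
        rw [Finset.fold_max_lt]
        refine ⟨by omega, fun j _ => ?_⟩
        refine lt_of_le_of_lt (le_trans natDegree_mul_le ?_) (hdegT j)
        simp [natDegree_C]
      exact lt_of_le_of_lt (natDegree_sub_le _ _) (max_lt h1 h2)
    have hD0 : Gm - ∑ j, Polynomial.C (algebraMap L (RatFunc L) (c j)) * T j = 0 := by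
      have hsepΩ : (FL.map ι).Separable := hsep.map
      have hsplit : (FL.map ι).Splits := IsAlgClosed.splits _
      have hcard : (FL.map ι).roots.toFinset.card = dy := by
        rw [Multiset.toFinset_card_of_nodup (nodup_roots hsepΩ),
          ← hsplit.natDegree_eq_card_roots, natDegree_map, hdegFL]
      have hmapD0 : (Gm - ∑ j, Polynomial.C (algebraMap L (RatFunc L) (c j)) * T j).map ι
          = 0 := by
        refine eq_zero_of_natDegree_lt_card_of_eval_eq_zero' _ (FL.map ι).roots.toFinset ?_ ?_
        · intro φ hφ
          rw [Multiset.mem_toFinset, mem_roots'] at hφ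
          rw [eval_map, ← aeval_def]
          refine hDroot φ ?_
          rw [aeval_def, ← eval_map]
          exact hφ.2
        · rw [hcard]; exact lt_of_le_of_lt (natDegree_map_le) hDdeg
      exact (Polynomial.map_eq_zero_iff ι.injective).mp hmapD0
    exact sub_eq_zero.mp hD0
  · -- backward
    rintro ⟨c, hc⟩ φ hφ
    rw [hevalF] at hφ
    rw [hevalG, hevalF']
    obtain ⟨j, hj⟩ := hrootE φ hφ
    have hGval : aeval φ Gm
        = ι (algebraMap L (RatFunc L) (c j)) * aeval φ (derivative FL) := by
      have h5 := congrArg (aeval φ) hc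
      rw [map_sum, Finset.sum_eq_single j] at h5
      · rw [h5, map_mul, aeval_C, hderT φ j hj]
      · intro k _ hk
        rw [map_mul, hTzero φ j k hj hk, mul_zero]
      · intro hh; exact absurd (Finset.mem_univ j) hh
    refine ⟨c j, ?_⟩
    simp only
    rw [hGval, mul_div_assoc, div_self (hder_ne φ hφ), mul_one]
end
end

section
/- Let R be a commutative ring, f₁,…,f_s ∈ R[y] with invertible leading coefficients, f = f₁⋯f_s, and suppose the logarithmic derivative identity Σ_i μ_i (f/f_i)·f_i' = f·(Π f_i^{μ_i})'/(Π f_i^{μ_i}) in the total ring of fractions, for μ ∈ ℤ^s. If R contains a field of characteristic zero, then Σ_i μ_i (f/f_i)·f_i' = 0 implies Π_i f_i^{μ_i} is a unit of R (i.e. lies in R and is constant in y). -/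
open Polynomial
noncomputable section

/-- A polynomial with unit leading coefficient is a non-zero-divisor. -/
lemma aux_reg {R : Type*} [CommRing R] {p q : Polynomial R}
    (hp : IsUnit p.leadingCoeff) (h : p * q = 0) : q = 0 := by
  by_contra hq
  have h0 := Polynomial.coeff_mul_degree_add_degree p q
  rw [h, Polynomial.coeff_zero] at h0
  have : q.leadingCoeff = 0 := (hp.mul_right_eq_zero).mp h0.symm
  exact hq (Polynomial.leadingCoeff_eq_zero.mp this)

/-- Finset version of `derivative_prod`. -/
lemma aux_derivative_prod {R ι : Type*} [CommRing R] [DecidableEq ι]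
    (t : Finset ι) (f : ι → Polynomial R) :
    derivative (∏ i ∈ t, f i) = ∑ i ∈ t, (∏ k ∈ t.erase i, f k) * derivative (f i) := by
  induction t using Finset.induction with
  | empty => simp
  | @insert a s ha ih =>
    rw [Finset.prod_insert ha, derivative_mul, ih, Finset.sum_insert ha,
      Finset.erase_insert ha, Finset.mul_sum]
    rw [mul_comm (derivative (f a)) (∏ i ∈ s, f i)]
    congr 1
    apply Finset.sum_congr rfl
    intro i hi
    have hai : a ≠ i := fun hh => ha (hh ▸ hi)
    rw [Finset.erase_insert_of_ne hai, Finset.prod_insert (fun hh => ha (Finset.mem_of_mem_erase hh))]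
    ring

lemma aux_keyA {R : Type*} [CommRing R] {s : ℕ} (f : Fin s → Polynomial R) (n : Fin s → ℕ)
    (hd : derivative (∏ i, f i ^ n i) =
      ∑ i, (∏ k ∈ Finset.univ.erase i, f k ^ n k) * derivative (f i ^ n i)) :
    derivative (∏ i, f i ^ n i) * ∏ i, f i =
    (∑ i, Polynomial.C ((n i : R)) * ((∏ k ∈ Finset.univ.erase i, f k) * derivative (f i))) *
      ∏ i, f i ^ n i := by
  rw [hd, Finset.sum_mul, Finset.sum_mul]
  apply Finset.sum_congr rfl
  intro i _
  rw [derivative_pow]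
  cases hn : n i with
  | zero => simp
  | succ m =>
    have h1 : ∏ k, f k = f i * ∏ k ∈ Finset.univ.erase i, f k :=
      (Finset.mul_prod_erase _ _ (Finset.mem_univ i)).symm
    have h2 : ∏ k, f k ^ n k = f i ^ n i * ∏ k ∈ Finset.univ.erase i, f k ^ n k :=
      (Finset.mul_prod_erase _ _ (Finset.mem_univ i)).symm
    rw [h1, h2, hn, Nat.add_sub_cancel, pow_succ]
    ring

lemma aux_cancel {R : Type*} [CommRing R]
    (hN : ∀ n : ℕ, 0 < n → IsUnit ((n : ℕ) : R)) {x : R} {m n : ℕ}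
    (hmn : m ≠ n) (hx : (m : R) * x = (n : R) * x) : x = 0 := by
  have key : ∀ a b : ℕ, a < b → ((a : R) * x = (b : R) * x) → x = 0 := by
    intro a b hab hx
    have h1 : ((b - a : ℕ) : R) * x = 0 := by
      rw [Nat.cast_sub hab.le, sub_mul, hx, sub_self]
    exact ((hN (b - a) (by omega)).mul_right_eq_zero).mp h1
  rcases Nat.lt_or_ge m n with hlt | hge
  · exact key m n hlt hx
  · exact key n m (by omega) hx.symm

lemma aux_unit_ne_zero {R : Type*} [CommRing R] [Nontrivial R] {a : R} (h : IsUnit a) :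
    a ≠ 0 := by
  rintro rfl
  exact one_ne_zero ((isUnit_zero_iff.mp h).symm)

lemma aux_wronskian {R : Type*} [CommRing R] [Nontrivial R]
    (hN : ∀ n : ℕ, 0 < n → IsUnit ((n : ℕ) : R))
    {g h : Polynomial R} (hg : IsUnit g.leadingCoeff) (hh : IsUnit h.leadingCoeff)
    (hW : derivative g * h = g * derivative h) :
    ∃ c : R, IsUnit c ∧ g = Polynomial.C c * h := by
  set m := g.natDegree with hm
  set n := h.natDegree with hn
  set A := g.leadingCoeff with hA
  set B := h.leadingCoeff with hB
  have hg0 : g ≠ 0 := fun h0 => aux_unit_ne_zero hg (by rw [hA, h0, leadingCoeff_zero])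
  have hh0 : h ≠ 0 := fun h0 => aux_unit_ne_zero hh (by rw [hB, h0, leadingCoeff_zero])
  have hcoeff_der : ∀ (p : Polynomial R) (d : ℕ), p.natDegree = d → 1 ≤ d →
      (derivative p).coeff (d - 1) = p.leadingCoeff * d := by
    intro p d hd h1
    subst hd
    rw [coeff_derivative, Nat.sub_add_cancel h1, coeff_natDegree]
    have hc : ((p.natDegree - 1 : ℕ) : R) = (p.natDegree : R) - 1 := by push_cast [h1]; ring
    rw [hc]
    ring
  -- step 1 : m = n
  have hmn : m = n := by
    by_contra hne
    rcases Nat.eq_zero_or_pos m with hm0 | hm1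
    · have hd0 : derivative g = 0 := by
        rw [eq_C_of_natDegree_eq_zero hm0, derivative_C]
      have hn1 : 1 ≤ n := by omega
      have h2 : g * derivative h = 0 := by rw [← hW, hd0, zero_mul]
      have h3 : derivative h = 0 := aux_reg hg h2
      have h4 : (derivative h).coeff (n - 1) = B * n := hcoeff_der h n rfl hn1
      rw [h3, coeff_zero] at h4
      have h5 : ((0 : ℕ) : R) * B = ((n : ℕ) : R) * B := by
        rw [Nat.cast_zero, zero_mul]
        linear_combination h4
      exact aux_unit_ne_zero hh (aux_cancel hN (show (0:ℕ) ≠ n by omega) h5)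
    rcases Nat.eq_zero_or_pos n with hn0 | hn1
    · have hd0 : derivative h = 0 := by
        rw [eq_C_of_natDegree_eq_zero hn0, derivative_C]
      have h2 : derivative g * h = 0 := by rw [hW, hd0, mul_zero]
      have h3 : derivative g = 0 := aux_reg hh (mul_comm (derivative g) h ▸ h2)
      have h4 : (derivative g).coeff (m - 1) = A * m := hcoeff_der g m rfl hm1
      rw [h3, coeff_zero] at h4
      have h5 : ((0 : ℕ) : R) * A = ((m : ℕ) : R) * A := by
        rw [Nat.cast_zero, zero_mul]
        linear_combination h4
      exact aux_unit_ne_zero hg (aux_cancel hN (show (0:ℕ) ≠ m by omega) h5)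
    have e1 : (derivative g * h).coeff ((m - 1) + n) = (A * m) * B := by
      rw [coeff_mul_add_eq_of_natDegree_le (natDegree_derivative_le g) (le_refl _)]
      rw [hcoeff_der g m rfl hm1, coeff_natDegree]
    have e2 : (g * derivative h).coeff (m + (n - 1)) = A * (B * n) := by
      rw [coeff_mul_add_eq_of_natDegree_le (le_refl _) (natDegree_derivative_le h)]
      rw [hcoeff_der h n rfl hn1, coeff_natDegree]
    have hidx : (m - 1) + n = m + (n - 1) := by omega
    rw [hW, hidx, e2] at e1
    have h5 : ((m : ℕ) : R) * (A * B) = ((n : ℕ) : R) * (A * B) := by linear_combination -e1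
    exact aux_unit_ne_zero (hg.mul hh) (aux_cancel hN hne h5)
  -- step 2
  rcases Nat.eq_zero_or_pos n with hn0 | hn1
  · have hm0 : g.natDegree = 0 := by omega
    have hn0' : h.natDegree = 0 := hn0
    refine ⟨A * ((hh.unit⁻¹ : Rˣ) : R), hg.mul (Units.isUnit _), ?_⟩
    have hgC : g = C A := by
      rw [hA, ← coeff_natDegree, hm0]
      exact eq_C_of_natDegree_eq_zero hm0
    have hhC : h = C B := by
      rw [hB, ← coeff_natDegree, hn0']
      exact eq_C_of_natDegree_eq_zero hn0'
    rw [hgC, hhC, ← C_mul, mul_assoc, hh.val_inv_mul, mul_one]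
  · set p := C B * g - C A * h with hp
    have hg_top : g.coeff n = A := by rw [← hmn]; exact coeff_natDegree
    have hh_top : h.coeff n = B := coeff_natDegree
    have hpcoeff : p.coeff n = 0 := by
      simp only [hp, coeff_sub, coeff_C_mul, hg_top, hh_top]
      ring
    have hpdeg : p.natDegree ≤ n := by
      refine (natDegree_sub_le _ _).trans (max_le ((natDegree_C_mul_le _ _).trans ?_)
        ((natDegree_C_mul_le _ _).trans ?_)) <;> omega
    have hpW : derivative p * h = p * derivative h := by
      have hsub : derivative p * h - p * derivative h
          = C B * (derivative g * h - g * derivative h) := by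
        simp only [hp, derivative_sub, derivative_C_mul]
        ring
      rw [hW, sub_self, mul_zero] at hsub
      exact sub_eq_zero.mp hsub
    have hp0 : p = 0 := by
      by_contra hpne
      set d := p.natDegree with hd
      set e := p.leadingCoeff with he
      have he0 : e ≠ 0 := fun h0 => hpne (leadingCoeff_eq_zero.mp h0)
      have hdn : d ≠ n := by
        intro hdn
        apply he0
        have hpn : p.natDegree = n := by omega
        rw [he, ← coeff_natDegree, hpn]
        exact hpcoeff
      have hdlt : d < n := by omega
      rcases Nat.eq_zero_or_pos d with hd0 | hd1
      · have hnd0 : p.natDegree = 0 := by omega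
        have h2 : derivative p = 0 := by
          rw [eq_C_of_natDegree_eq_zero hnd0, derivative_C]
        have h3 : p * derivative h = 0 := by rw [← hpW, h2, zero_mul]
        have h4 : (p * derivative h).coeff (0 + (n - 1)) = e * (B * n) := by
          rw [coeff_mul_add_eq_of_natDegree_le (by omega) (natDegree_derivative_le h),
            hcoeff_der h n rfl hn1]
          congr 1
          rw [he, ← coeff_natDegree, hnd0]
        rw [h3, coeff_zero] at h4
        have h5 : ((0 : ℕ) : R) * (e * B) = ((n : ℕ) : R) * (e * B) := by
          rw [Nat.cast_zero, zero_mul]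
          linear_combination h4
        have h6 := aux_cancel hN (show (0:ℕ) ≠ n by omega) h5
        exact he0 ((hh.mul_right_eq_zero).mp (by linear_combination h6))
      · have e1 : (derivative p * h).coeff ((d - 1) + n) = (e * d) * B := by
          rw [coeff_mul_add_eq_of_natDegree_le (natDegree_derivative_le p) (le_refl _)]
          rw [hcoeff_der p d rfl hd1, coeff_natDegree]
        have e2 : (p * derivative h).coeff (d + (n - 1)) = e * (B * n) := by
          rw [coeff_mul_add_eq_of_natDegree_le (le_refl _) (natDegree_derivative_le h)]
          rw [hcoeff_der h n rfl hn1, coeff_natDegree]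
        have hidx : (d - 1) + n = d + (n - 1) := by omega
        rw [hpW, hidx, e2] at e1
        have h5 : ((d : ℕ) : R) * (e * B) = ((n : ℕ) : R) * (e * B) := by linear_combination -e1
        have h6 := aux_cancel hN hdn h5
        exact he0 ((hh.mul_right_eq_zero).mp (by linear_combination h6))
    have h7 : C B * g - C A * h = 0 := by rw [← hp]; exact hp0
    have hBA : C B * g = C A * h := sub_eq_zero.mp h7
    refine ⟨((hh.unit⁻¹ : Rˣ) : R) * A, (Units.isUnit _).mul hg, ?_⟩
    have h8 : C (((hh.unit⁻¹ : Rˣ) : R)) * (C B * g) = C (((hh.unit⁻¹ : Rˣ) : R)) * (C A * h) := by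
      rw [hBA]
    rw [← mul_assoc, ← C_mul, hh.val_inv_mul, C_1, one_mul] at h8
    rw [h8, ← mul_assoc, ← C_mul]

/-- Let `R` be a commutative ring containing a field `K` of characteristic
zero, and `f₁,…,f_s ∈ R[y]` with invertible leading coefficients, `f = f₁⋯f_s`.  If the
logarithmic-derivative combination `Σ_i μ_i (f/f_i)·f_i'` vanishes for some `μ ∈ ℤ^s`, then
`Π_i f_i^{μ_i}` is a unit of `R`, i.e. (clearing the negative exponents)
`Π_{μ_i ≥ 0} f_i^{μ_i} = c · Π_{μ_i < 0} f_i^{−μ_i}` for some unit `c` of `R`. -/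
theorem stmt9 {K R : Type*} [Field K] [CharZero K] [CommRing R] [Algebra K R]
    (s : ℕ) (f : Fin s → Polynomial R)
    (hlc : ∀ i, IsUnit (f i).leadingCoeff)
    (μ : Fin s → ℤ)
    (h : ∑ i, Polynomial.C ((μ i : ℤ) : R) *
        ((∏ k ∈ Finset.univ.erase i, f k) * derivative (f i)) = 0) :
    ∃ c : R, IsUnit c ∧
      ∏ i, (f i) ^ (μ i).toNat = Polynomial.C c * ∏ i, (f i) ^ (-(μ i)).toNat := by
  rcases subsingleton_or_nontrivial R with hsub | hnt
  · exact ⟨1, isUnit_one, Subsingleton.elim _ _⟩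
  have hN : ∀ n : ℕ, 0 < n → IsUnit ((n : ℕ) : R) := by
    intro n hn
    have h1 : ((n : ℕ) : K) ≠ 0 := Nat.cast_ne_zero.mpr (by omega)
    have h2 := (isUnit_iff_ne_zero.mpr h1).map (algebraMap K R)
    rwa [map_natCast] at h2
  classical
  set a : Fin s → ℕ := fun i => (μ i).toNat with ha
  set b : Fin s → ℕ := fun i => (-(μ i)).toNat with hb
  -- unit products
  have hUnit : ∀ (c : Fin s → R), (∀ i, IsUnit (c i)) → IsUnit (∏ i, c i) := fun c hc =>
    Finset.prod_induction c IsUnit (fun x y => IsUnit.mul) isUnit_one (fun i _ => hc i)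
  have hlcpow : ∀ (i : Fin s) (t : ℕ), (f i ^ t).leadingCoeff = (f i).leadingCoeff ^ t :=
    fun i t => leadingCoeff_pow' (aux_unit_ne_zero ((hlc i).pow t))
  have hlcF : IsUnit (∏ i, f i).leadingCoeff := by
    rw [leadingCoeff_prod' _ _ (aux_unit_ne_zero (hUnit _ fun i => hlc i))]
    exact hUnit _ fun i => hlc i
  have hlcprod : ∀ (t : Fin s → ℕ), IsUnit (∏ i, f i ^ t i).leadingCoeff := by
    intro t
    have h1 : (∏ i, (f i ^ t i).leadingCoeff) = ∏ i, (f i).leadingCoeff ^ t i :=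
      Finset.prod_congr rfl fun i _ => hlcpow i (t i)
    have h2 : IsUnit (∏ i, (f i).leadingCoeff ^ t i) := hUnit _ fun i => (hlc i).pow _
    rw [leadingCoeff_prod' _ _ (by rw [h1]; exact aux_unit_ne_zero h2), h1]
    exact h2
  -- the two log-derivative identities
  have hda := aux_keyA f a (aux_derivative_prod Finset.univ _)
  have hdb := aux_keyA f b (aux_derivative_prod Finset.univ _)
  -- from the hypothesis, the two weighted sums coincide
  have hcast : ∀ i, ((μ i : ℤ) : R) = ((a i : ℕ) : R) - ((b i : ℕ) : R) := by
    intro i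
    have h1 : ((a i : ℤ) - (b i : ℤ)) = μ i := by simp only [ha, hb]; omega
    calc ((μ i : ℤ) : R) = (((a i : ℤ) - (b i : ℤ) : ℤ) : R) := by rw [h1]
      _ = ((a i : ℕ) : R) - ((b i : ℕ) : R) := by push_cast; ring
  have h0 : ∑ i, (Polynomial.C ((a i : ℕ) : R) - Polynomial.C ((b i : ℕ) : R)) *
      ((∏ k ∈ Finset.univ.erase i, f k) * derivative (f i)) = 0 := by
    rw [← h]
    apply Finset.sum_congr rfl
    intro i _
    rw [hcast i, C_sub]
  have h1 : (∑ i, Polynomial.C ((a i : ℕ) : R) *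
        ((∏ k ∈ Finset.univ.erase i, f k) * derivative (f i)))
      - (∑ i, Polynomial.C ((b i : ℕ) : R) *
        ((∏ k ∈ Finset.univ.erase i, f k) * derivative (f i))) = 0 := by
    rw [← Finset.sum_sub_distrib, ← h0]
    apply Finset.sum_congr rfl
    intro i _
    rw [sub_mul]
  have hS := sub_eq_zero.mp h1
  -- Wronskian vanishes
  have hw0 : (derivative (∏ i, f i ^ a i) * (∏ i, f i ^ b i)
      - (∏ i, f i ^ a i) * derivative (∏ i, f i ^ b i)) * (∏ i, f i) = 0 := by
    have e1 : (derivative (∏ i, f i ^ a i) * (∏ i, f i ^ b i)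
        - (∏ i, f i ^ a i) * derivative (∏ i, f i ^ b i)) * (∏ i, f i)
        = (derivative (∏ i, f i ^ a i) * (∏ i, f i)) * (∏ i, f i ^ b i)
        - (derivative (∏ i, f i ^ b i) * (∏ i, f i)) * (∏ i, f i ^ a i) := by ring
    rw [e1, hda, hdb, hS]
    ring
  have hw : derivative (∏ i, f i ^ a i) * (∏ i, f i ^ b i)
      = (∏ i, f i ^ a i) * derivative (∏ i, f i ^ b i) := by
    rw [mul_comm] at hw0
    exact sub_eq_zero.mp (aux_reg hlcF hw0)
  obtain ⟨c, hc, hck⟩ := aux_wronskian hN (hlcprod a) (hlcprod b) hw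
  exact ⟨c, hc, hck⟩
end
end

section
/- Let F ∈ K[x,y] be separable of y-degree d_y and x-degree d_x with irreducible analytic factors 𝓕₁,…,𝓕_s in K[[x]][y], let 𝔽 be a subfield of K, V(𝔽) = {μ ∈ 𝔽^s : all residues of G_μ/F lie in 𝔽} where G_μ = [Σ μ_i (F/𝓕_i)∂_y𝓕_i]^{d_x+1} is the truncation modulo x^{d_x+1}, Z = {μ ∈ 𝔽^s : G_μ = 0}, and S the 𝔽-span of the recombination vectors v₁,…,v_r of the rational factors. Then V(𝔽) = S ⊕ Z. -/
open Polynomial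

open scoped Classical

set_option synthInstance.maxHeartbeats 1000000
set_option maxHeartbeats 1000000

noncomputable section

/-- Coefficientwise truncation modulo `x^n` of a polynomial in `y` with power-series
coefficients, yielding a bivariate polynomial. -/
def truncX {K : Type*} [CommRing K] (n : ℕ) (P : Polynomial (PowerSeries K)) :
    Polynomial (Polynomial K) :=
  P.sum fun k a => Polynomial.C (PowerSeries.trunc n a) * Polynomial.X ^ k

namespace Stmt10Aux

variable {K : Type*} [Field K]

/-- the x-degree of a bivariate polynomial -/
def degX (P : Polynomial (Polynomial K)) : ℕ :=
  P.support.sup fun k => (P.coeff k).natDegree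

lemma natDegree_coeff_le (P : Polynomial (Polynomial K)) (k : ℕ) :
    (P.coeff k).natDegree ≤ degX P := by
  by_cases h : k ∈ P.support
  · exact Finset.le_sup (f := fun k => (P.coeff k).natDegree) h
  · simp [Polynomial.notMem_support_iff.mp h]

lemma degX_le_of_forall {P : Polynomial (Polynomial K)} {n : ℕ}
    (h : ∀ k, (P.coeff k).natDegree ≤ n) : degX P ≤ n :=
  Finset.sup_le fun k _ => h k

/-- the coefficient of `x^a` as a polynomial in `y` -/
def sliceX (a : ℕ) (P : Polynomial (Polynomial K)) : Polynomial K :=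
  ∑ k ∈ P.support, Polynomial.C ((P.coeff k).coeff a) * Polynomial.X ^ k

lemma coeff_sliceX (a : ℕ) (P : Polynomial (Polynomial K)) (m : ℕ) :
    (sliceX a P).coeff m = (P.coeff m).coeff a := by
  rw [sliceX, Polynomial.finset_sum_coeff]
  simp only [Polynomial.coeff_C_mul, Polynomial.coeff_X_pow, mul_ite, mul_one, mul_zero]
  rw [Finset.sum_ite_eq P.support m (fun k => (P.coeff k).coeff a)]
  by_cases h : m ∈ P.support
  · simp [h]
  · simp [h, Polynomial.notMem_support_iff.mp h]

lemma sliceX_mul (P Q : Polynomial (Polynomial K)) (a b : ℕ)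
    (hP : ∀ k, (P.coeff k).natDegree ≤ a) (hQ : ∀ k, (Q.coeff k).natDegree ≤ b) :
    sliceX (a + b) (P * Q) = sliceX a P * sliceX b Q := by
  ext m
  rw [coeff_sliceX, Polynomial.coeff_mul, Polynomial.coeff_mul, Polynomial.finset_sum_coeff]
  refine Finset.sum_congr rfl fun x hx => ?_
  rw [coeff_sliceX, coeff_sliceX, Polynomial.coeff_mul]
  refine Finset.sum_eq_single (a, b) (fun y hy hne => ?_) (fun hab => ?_)
  · rcases lt_or_ge a y.1 with h1 | h1
    · rw [Polynomial.coeff_eq_zero_of_natDegree_lt ((hP x.1).trans_lt h1), zero_mul]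
    · have : b < y.2 := by
        have := Finset.HasAntidiagonal.mem_antidiagonal.mp hy
        rcases lt_or_eq_of_le h1 with h2 | h2
        · omega
        · exfalso; apply hne
          have h3 : y.2 = b := by omega
          have h4 : y.1 = a := by omega
          cases y; simp_all
      rw [Polynomial.coeff_eq_zero_of_natDegree_lt ((hQ x.2).trans_lt this), mul_zero]
  · exact absurd (Finset.HasAntidiagonal.mem_antidiagonal.mpr (by simp)) hab

lemma sliceX_degX_ne_zero {P : Polynomial (Polynomial K)} (hP : P ≠ 0) :
    sliceX (degX P) P ≠ 0 := by
  obtain ⟨k, hk, hsup⟩ := Finset.exists_mem_eq_sup P.support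
    (Polynomial.support_nonempty.mpr hP) (fun k => (P.coeff k).natDegree)
  have hc : P.coeff k ≠ 0 := Polynomial.mem_support_iff.mp hk
  have : (sliceX (degX P) P).coeff k ≠ 0 := by
    rw [coeff_sliceX, degX, hsup]
    exact Polynomial.leadingCoeff_ne_zero.mpr hc
  exact fun h => this (by rw [h]; simp)

lemma degX_mul {P Q : Polynomial (Polynomial K)} (hP : P ≠ 0) (hQ : Q ≠ 0) :
    degX (P * Q) = degX P + degX Q := by
  refine le_antisymm ?_ ?_
  · refine degX_le_of_forall fun m => ?_
    rw [Polynomial.coeff_mul]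
    refine (Polynomial.natDegree_sum_le_of_forall_le _ _ fun x hx => ?_)
    exact (Polynomial.natDegree_mul_le).trans
      (add_le_add (natDegree_coeff_le P x.1) (natDegree_coeff_le Q x.2))
  · have hPQ : sliceX (degX P + degX Q) (P * Q) ≠ 0 := by
      rw [sliceX_mul P Q _ _ (fun k => natDegree_coeff_le P k) (fun k => natDegree_coeff_le Q k)]
      exact mul_ne_zero (sliceX_degX_ne_zero hP) (sliceX_degX_ne_zero hQ)
    obtain ⟨m, hm⟩ : ∃ m, (sliceX (degX P + degX Q) (P * Q)).coeff m ≠ 0 := by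
      by_contra hc; push_neg at hc
      exact hPQ (Polynomial.ext fun m => by simpa using hc m)
    rw [coeff_sliceX] at hm
    exact (Polynomial.le_natDegree_of_ne_zero hm).trans (natDegree_coeff_le _ m)

lemma degX_derivative_le (P : Polynomial (Polynomial K)) :
    degX (derivative P) ≤ degX P := by
  refine degX_le_of_forall fun k => ?_
  rw [Polynomial.coeff_derivative]
  refine (Polynomial.natDegree_mul_le).trans ?_
  have h1 : ((k : Polynomial K) + 1).natDegree = 0 := by
    have : ((k : Polynomial K) + 1) = ((k + 1 : ℕ) : Polynomial K) := by push_cast; ring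
    rw [this, Polynomial.natDegree_natCast]
  rw [h1, add_zero]
  exact natDegree_coeff_le P (k + 1)

section Trunc

lemma coeff_truncX (n : ℕ) (P : Polynomial (PowerSeries K)) (k : ℕ) :
    (truncX n P).coeff k = PowerSeries.trunc n (P.coeff k) := by
  rw [truncX, Polynomial.sum, Polynomial.finset_sum_coeff]
  simp only [Polynomial.coeff_C_mul, Polynomial.coeff_X_pow, mul_ite, mul_one, mul_zero]
  rw [Finset.sum_ite_eq P.support k (fun j => PowerSeries.trunc n (P.coeff j))]
  by_cases h : k ∈ P.support
  · simp [h]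
  · simp [h, Polynomial.notMem_support_iff.mp h]

lemma truncX_add (n : ℕ) (P Q : Polynomial (PowerSeries K)) :
    truncX n (P + Q) = truncX n P + truncX n Q := by
  ext k m
  simp [coeff_truncX, map_add]

lemma truncX_zero (n : ℕ) : truncX n (0 : Polynomial (PowerSeries K)) = 0 := by
  ext k m
  simp [coeff_truncX]

lemma trunc_C_mul (n : ℕ) (a : K) (f : PowerSeries K) :
    PowerSeries.trunc n (PowerSeries.C a * f) = Polynomial.C a * PowerSeries.trunc n f := by
  ext m
  rw [PowerSeries.coeff_trunc, Polynomial.coeff_C_mul, PowerSeries.coeff_trunc]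
  split_ifs with h
  · simp [PowerSeries.coeff_C_mul]
  · simp

lemma truncX_C_mul (n : ℕ) (a : K) (P : Polynomial (PowerSeries K)) :
    truncX n (Polynomial.C (PowerSeries.C a) * P)
      = Polynomial.C (Polynomial.C a) * truncX n P := by
  ext k
  rw [coeff_truncX, Polynomial.coeff_C_mul, Polynomial.coeff_C_mul, coeff_truncX, trunc_C_mul]

lemma truncX_sum {ι : Type*} (n : ℕ) (s : Finset ι) (f : ι → Polynomial (PowerSeries K)) :
    truncX n (∑ i ∈ s, f i) = ∑ i ∈ s, truncX n (f i) := by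
  classical
  induction s using Finset.induction_on with
  | empty => simp [truncX_zero]
  | insert _ _ h ih => rw [Finset.sum_insert h, truncX_add, ih, Finset.sum_insert h]

lemma truncX_map_E {n : ℕ} {P : Polynomial (Polynomial K)}
    (hd : ∀ k, (P.coeff k).natDegree < n) :
    truncX n (P.map Polynomial.coeToPowerSeries.ringHom) = P := by
  ext k
  rw [coeff_truncX, Polynomial.coeff_map, Polynomial.coeToPowerSeries.ringHom_apply,
    PowerSeries.trunc_coe_eq_self (hd k)]

lemma natDegree_truncX_le (n : ℕ) (P : Polynomial (PowerSeries K)) :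
    (truncX n P).natDegree ≤ P.natDegree := by
  refine Polynomial.natDegree_le_iff_coeff_eq_zero.mpr fun m hm => ?_
  rw [coeff_truncX, Polynomial.coeff_eq_zero_of_natDegree_lt hm]
  simp

end Trunc



lemma prod_primes_dvd' {α : Type*} [CommMonoidWithZero α] [IsCancelMulZero α] {ι : Type*}
    (s : Finset ι) (p : ι → α) (n : α)
    (hp : ∀ i ∈ s, Prime (p i)) (hd : ∀ i ∈ s, p i ∣ n)
    (hna : ∀ i ∈ s, ∀ k ∈ s, i ≠ k → ¬ Associated (p i) (p k)) :
    (∏ i ∈ s, p i) ∣ n := by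
  classical
  induction s using Finset.induction_on generalizing n with
  | empty => simp
  | @insert a t ha ih =>
    obtain ⟨m, rfl⟩ := hd a (Finset.mem_insert_self a t)
    rw [Finset.prod_insert ha]
    have hdm : ∀ i ∈ t, p i ∣ m := by
      intro i hi
      have hia : i ≠ a := fun h => ha (h ▸ hi)
      have hpi := hp i (Finset.mem_insert_of_mem hi)
      have hpa := hp a (Finset.mem_insert_self a t)
      refine (hpi.dvd_or_dvd (hd i (Finset.mem_insert_of_mem hi))).resolve_left fun hdvd => ?_
      exact hna i (Finset.mem_insert_of_mem hi) a (Finset.mem_insert_self a t) hia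
        (hpi.associated_of_dvd hpa hdvd)
    exact mul_dvd_mul_left _ (ih m (fun i hi => hp i (Finset.mem_insert_of_mem hi)) hdm
      (fun i hi k hk hik => hna i (Finset.mem_insert_of_mem hi) k
        (Finset.mem_insert_of_mem hk) hik))

lemma derivative_finset_prod {R ι : Type*} [CommRing R] [DecidableEq ι] (s : Finset ι) (f : ι → R[X]) :
    derivative (∏ i ∈ s, f i) = ∑ i ∈ s, (∏ j ∈ s.erase i, f j) * derivative (f i) := by
  classical
  induction s using Finset.induction_on with
  | empty => simp
  | @insert a t ha ih =>
    rw [Finset.prod_insert ha, derivative_mul, ih, Finset.sum_insert ha,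
      Finset.erase_insert ha, Finset.mul_sum]
    congr 1
    · ring
    · refine Finset.sum_congr rfl fun i hi => ?_
      have hia : a ≠ i := fun h => ha (h ▸ hi)
      rw [Finset.erase_insert_of_ne hia, Finset.prod_insert
        (fun h => ha (Finset.mem_of_mem_erase h))]
      ring

lemma eval_derivative_prod_root {M ι : Type*} [CommRing M] [DecidableEq ι] (s : Finset ι)
    (G : ι → M[X]) {j : ι} (hj : j ∈ s) (φ : M) (h0 : eval φ (G j) = 0)
    (huniq : ∀ l ∈ s, l ≠ j → eval φ (∏ m ∈ s.erase l, G m) = 0) :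
    eval φ (derivative (∏ l ∈ s, G l))
      = eval φ (∏ l ∈ s.erase j, G l) * eval φ (derivative (G j)) := by
  classical
  rw [derivative_finset_prod, eval_finset_sum]
  rw [Finset.sum_eq_single j (fun l hl hne => ?_) (fun h => absurd hj h)]
  · rw [eval_mul]
  · rw [eval_mul, huniq l hl hne, zero_mul]

lemma eval_prod_erase_eq_zero {M ι : Type*} [CommRing M] [DecidableEq ι] (s : Finset ι)
    (G : ι → M[X]) {j l : ι} (hj : j ∈ s) (hne : l ≠ j) (φ : M) (h0 : eval φ (G j) = 0) :
    eval φ (∏ m ∈ s.erase l, G m) = 0 := by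
  classical
  rw [eval_prod]
  exact Finset.prod_eq_zero (Finset.mem_erase.mpr ⟨fun h => hne h.symm, hj⟩) h0

open IntermediateField in
lemma exists_algHom_root {L : Type*} [Field L] {q : L[X]} (hq : Irreducible q)
    {φ φ' : AlgebraicClosure L} (h1 : aeval φ q = 0) (h2 : aeval φ' q = 0) :
    ∃ σ : AlgebraicClosure L →ₐ[L] AlgebraicClosure L, σ φ = φ' := by
  have hint : IsIntegral L φ := Algebra.IsIntegral.isIntegral φ
  have hmin : minpoly L φ = minpoly L φ' :=
    (minpoly.eq_of_irreducible hq h1).symm.trans (minpoly.eq_of_irreducible hq h2)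
  have hroot : φ' ∈ (minpoly L φ).aroots (AlgebraicClosure L) :=
    Polynomial.mem_aroots.mpr ⟨minpoly.ne_zero hint, by rw [hmin]; exact minpoly.aeval L φ'⟩
  set τ : L⟮φ⟯ →ₐ[L] AlgebraicClosure L := (IntermediateField.algHomAdjoinIntegralEquiv L hint).symm ⟨φ', hroot⟩
    with hτ
  refine ⟨τ.liftNormal (AlgebraicClosure L), ?_⟩
  have hgen : (algebraMap (↥L⟮φ⟯) (AlgebraicClosure L)) (IntermediateField.AdjoinSimple.gen L φ) = φ :=
    IntermediateField.AdjoinSimple.coe_gen L φ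
  have h5 : (τ.liftNormal (AlgebraicClosure L)) φ
      = (τ.liftNormal (AlgebraicClosure L))
        ((algebraMap (↥L⟮φ⟯) (AlgebraicClosure L)) (IntermediateField.AdjoinSimple.gen L φ)) := by
    rw [hgen]
  have h6 := IntermediateField.algHomAdjoinIntegralEquiv_symm_apply_gen L hint ⟨φ', hroot⟩
  rw [← hτ] at h6
  rw [h5, AlgHom.liftNormal_commutes, h6]
  simp

end Stmt10Aux

open Stmt10Aux

/-- `V(𝔽) = S ⊕ Z`: with `F ∈ K[x,y]` squarefree, separable and primitive in
`y`, `F = F₁⋯F_r` its rational factorization, `F = u·𝓕₁⋯𝓕_s` its analytic factorization,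
`G_μ = [Σ μ_i (F/𝓕_i)∂_y𝓕_i]^{d_x+1}`, `𝔽` a subfield of `K`, the space
`V(𝔽) = {μ : residues of G_μ/F lie in 𝔽}` is the direct sum of the span `S` of the
recombination vectors and of `Z = {μ : G_μ = 0}`. -/
theorem stmt10 {K : Type*} [Field K] (𝔽 : Subfield K)
    (F : Polynomial (Polynomial K)) (hsq : Squarefree F) (hprim : F.IsPrimitive)
    (hsep : (F.map (algebraMap (Polynomial K) (RatFunc K))).Separable)
    (dx : ℕ) (hdx : dx = F.support.sup fun k => (F.coeff k).natDegree)
    (r : ℕ) (Fj : Fin r → Polynomial (Polynomial K))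
    (hF : F = ∏ j, Fj j) (hFirr : ∀ j, Irreducible (Fj j))
    (s : ℕ) (u : PowerSeries K) (hu : IsUnit u)
    (𝓕 : Fin s → Polynomial (PowerSeries K))
    (hfa : F.map Polynomial.coeToPowerSeries.ringHom = Polynomial.C u * ∏ i, 𝓕 i)
    (h𝓕irr : ∀ i, Irreducible (𝓕 i))
    (v : Fin r → Fin s → 𝔽)
    (hv : ∀ j i, v j i =
      if 𝓕 i ∣ (Fj j).map Polynomial.coeToPowerSeries.ringHom then 1 else 0)
    (Gm : (Fin s → 𝔽) → Polynomial (Polynomial K))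
    (hGm : ∀ μ, Gm μ = truncX (dx + 1)
      (∑ i, Polynomial.C (PowerSeries.C (μ i : K)) *
        ((Polynomial.C u * ∏ k ∈ Finset.univ.erase i, 𝓕 k) * derivative (𝓕 i)))) :
    (∀ μ : Fin s → 𝔽,
      (∀ φ : AlgebraicClosure (RatFunc K),
          Polynomial.eval φ (F.map ((algebraMap (RatFunc K) (AlgebraicClosure (RatFunc K))).comp
              (algebraMap (Polynomial K) (RatFunc K)))) = 0 →
          Polynomial.eval φ ((Gm μ).map
              ((algebraMap (RatFunc K) (AlgebraicClosure (RatFunc K))).comp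
                (algebraMap (Polynomial K) (RatFunc K)))) /
            Polynomial.eval φ (derivative (F.map
              ((algebraMap (RatFunc K) (AlgebraicClosure (RatFunc K))).comp
                (algebraMap (Polynomial K) (RatFunc K))))) ∈
            Set.range (fun c : 𝔽 =>
              algebraMap (RatFunc K) (AlgebraicClosure (RatFunc K))
                (algebraMap (Polynomial K) (RatFunc K) (Polynomial.C (c : K)))))
        ↔
      (∃ a b : Fin s → 𝔽,
        a ∈ Submodule.span 𝔽 (Set.range v) ∧ Gm b = 0 ∧ μ = a + b)) ∧
    (∀ μ : Fin s → 𝔽, μ ∈ Submodule.span 𝔽 (Set.range v) → Gm μ = 0 → μ = 0) := by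
  classical
  set E : Polynomial K →+* PowerSeries K := Polynomial.coeToPowerSeries.ringHom with hE
  set ψ : Polynomial K →+* AlgebraicClosure (RatFunc K) :=
    ((algebraMap (RatFunc K) (AlgebraicClosure (RatFunc K))).comp
      (algebraMap (Polynomial K) (RatFunc K))) with hψ
  -- ====================== basic nonvanishing ======================
  have hF0 : F ≠ 0 := by
    intro h
    exact Polynomial.not_isUnit_X (hprim Polynomial.X (by rw [h]; exact dvd_zero _))
  have hFjne : ∀ j, Fj j ≠ 0 := fun j => (hFirr j).ne_zero
  have hFjdvd : ∀ j, Fj j ∣ F := fun j => hF ▸ Finset.dvd_prod_of_mem Fj (Finset.mem_univ j)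
  have hFjdeg : ∀ j, (Fj j).natDegree ≠ 0 := by
    intro j hdeg
    have h1 : Fj j = Polynomial.C ((Fj j).coeff 0) := Polynomial.eq_C_of_natDegree_eq_zero hdeg
    have h2 : IsUnit ((Fj j).coeff 0) := hprim _ (by rw [← h1]; exact hFjdvd j)
    exact (hFirr j).not_isUnit (h1 ▸ Polynomial.isUnit_C.mpr h2)
  have hEinj : Function.Injective E := by
    intro a b hab
    have := congrArg (fun q => PowerSeries.trunc (a.natDegree + b.natDegree + 1) q) hab
    simpa [hE, Polynomial.coeToPowerSeries.ringHom_apply,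
      PowerSeries.trunc_coe_eq_self (by omega : a.natDegree < a.natDegree + b.natDegree + 1),
      PowerSeries.trunc_coe_eq_self (by omega : b.natDegree < a.natDegree + b.natDegree + 1)]
      using this
  have hψinj : Function.Injective ψ := by
    rw [hψ]
    exact (algebraMap (RatFunc K) (AlgebraicClosure (RatFunc K))).injective.comp
      (IsFractionRing.injective (Polynomial K) (RatFunc K))
  have h𝓕ne : ∀ i, 𝓕 i ≠ 0 := fun i => (h𝓕irr i).ne_zero
  have h𝓕prime : ∀ i, Prime (𝓕 i) :=
    fun i => UniqueFactorizationMonoid.irreducible_iff_prime.mp (h𝓕irr i)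
  have h𝓕dvd : ∀ i, 𝓕 i ∣ F.map E := by
    intro i
    rw [hfa]
    exact dvd_mul_of_dvd_right (Finset.dvd_prod_of_mem 𝓕 (Finset.mem_univ i)) _
  -- ====================== x does not divide F ======================
  have hXnd : ¬ (Polynomial.C (PowerSeries.X : PowerSeries K) ∣ F.map E) := by
    intro hdvd
    have h1 : ∀ k, (PowerSeries.X : PowerSeries K) ∣ (F.map E).coeff k :=
      (Polynomial.C_dvd_iff_dvd_coeff _ _).mp hdvd
    have h2 : Polynomial.C (Polynomial.X : Polynomial K) ∣ F := by
      rw [Polynomial.C_dvd_iff_dvd_coeff]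
      intro k
      rw [Polynomial.X_dvd_iff]
      have h3 := h1 k
      rw [Polynomial.coeff_map, hE, Polynomial.coeToPowerSeries.ringHom_apply,
        PowerSeries.X_dvd_iff] at h3
      simpa [Polynomial.coeff_coe] using h3
    exact Polynomial.not_isUnit_X (hprim _ h2)
  have h𝓕deg : ∀ i, (𝓕 i).natDegree ≠ 0 := by
    intro i hdeg
    have h1 : 𝓕 i = Polynomial.C ((𝓕 i).coeff 0) := Polynomial.eq_C_of_natDegree_eq_zero hdeg
    have h2 : ¬ IsUnit ((𝓕 i).coeff 0) := fun h => (h𝓕irr i).not_isUnit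
      (h1 ▸ Polynomial.isUnit_C.mpr h)
    have h3 : (PowerSeries.X : PowerSeries K) ∣ (𝓕 i).coeff 0 := by
      rw [PowerSeries.X_dvd_iff]
      by_contra h4
      exact h2 (PowerSeries.isUnit_iff_constantCoeff.mpr (isUnit_iff_ne_zero.mpr h4))
    exact hXnd ((map_dvd (Polynomial.C : PowerSeries K →+* Polynomial (PowerSeries K)) h3).trans (by rw [← h1]; exact h𝓕dvd i))
  -- ====================== squarefreeness over Laurent series ======================
  have hnosq : ∀ i, ¬ (𝓕 i * 𝓕 i ∣ F.map E) := by
    have lam := (HahnSeries.ofPowerSeries ℤ K)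
    have hcomm : (HahnSeries.ofPowerSeries ℤ K : PowerSeries K →+* LaurentSeries K).comp E
        = (@algebraMap (RatFunc K) (LaurentSeries K) _ _ (RatFunc.liftAlgebra K (LaurentSeries K))).comp (algebraMap (Polynomial K) (RatFunc K)) := by
      refine RingHom.ext fun p => ?_
      show HahnSeries.ofPowerSeries ℤ K (E p)
        = @algebraMap (RatFunc K) (LaurentSeries K) _ _ (RatFunc.liftAlgebra K (LaurentSeries K)) (algebraMap (Polynomial K) (RatFunc K) p)
      rw [hE, Polynomial.coeToPowerSeries.ringHom_apply]
      rw [RatFunc.coe_coe p]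
      rfl
    have hsepL : (((F.map E)).map
        (HahnSeries.ofPowerSeries ℤ K : PowerSeries K →+* LaurentSeries K)).Separable := by
      rw [Polynomial.map_map, hcomm, ← Polynomial.map_map]
      exact hsep.map
    have hsqf := hsepL.squarefree
    intro i hdvd
    have h1 := Polynomial.map_dvd
      (HahnSeries.ofPowerSeries ℤ K : PowerSeries K →+* LaurentSeries K) hdvd
    rw [Polynomial.map_mul] at h1
    have h2 := hsqf _ h1
    have h3 := Polynomial.natDegree_eq_zero_of_isUnit h2
    rw [Polynomial.natDegree_map_eq_of_injective (HahnSeries.ofPowerSeries_injective)] at h3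
    exact h𝓕deg i h3
  have hnassoc : ∀ i ∈ (Finset.univ : Finset (Fin s)), ∀ k ∈ (Finset.univ : Finset (Fin s)),
      i ≠ k → ¬ Associated (𝓕 i) (𝓕 k) := by
    intro i _ k _ hik hassoc
    apply hnosq i
    have h1 : 𝓕 i * 𝓕 k ∣ ∏ m, 𝓕 m := by
      rw [← Finset.mul_prod_erase Finset.univ 𝓕 (Finset.mem_univ i)]
      exact mul_dvd_mul_left _ (Finset.dvd_prod_of_mem 𝓕
        (Finset.mem_erase.mpr ⟨fun h => hik h.symm, Finset.mem_univ k⟩))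
    have h2 : 𝓕 i * 𝓕 i ∣ 𝓕 i * 𝓕 k := mul_dvd_mul_left _ hassoc.dvd
    refine (h2.trans h1).trans ?_
    rw [hfa]
    exact dvd_mul_left _ _
  have hEFprod : F.map E = ∏ j, (Fj j).map E := by
    conv_lhs => rw [hF]
    rw [Polynomial.map_prod]
  -- ====================== existence & uniqueness of the factor index ======================
  have huniq : ∀ i, ∃! j, 𝓕 i ∣ (Fj j).map E := by
    intro i
    have h1 : 𝓕 i ∣ ∏ j, (Fj j).map E := hEFprod ▸ h𝓕dvd i
    obtain ⟨j, _, hj⟩ := (h𝓕prime i).exists_mem_finset_dvd h1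
    refine ⟨j, hj, fun j' hj' => ?_⟩
    by_contra hne
    apply hnosq i
    rw [hEFprod, ← Finset.mul_prod_erase Finset.univ _ (Finset.mem_univ j')]
    exact mul_dvd_mul hj' (hj.trans (Finset.dvd_prod_of_mem _
      (Finset.mem_erase.mpr ⟨fun h => hne h.symm, Finset.mem_univ j⟩)))
  set σf : Fin s → Fin r := fun i => (huniq i).choose with hσf
  have hσfdvd : ∀ i, 𝓕 i ∣ (Fj (σf i)).map E := fun i => (huniq i).choose_spec.1
  have hmemS : ∀ i j, 𝓕 i ∣ (Fj j).map E ↔ σf i = j := by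
    intro i j
    constructor
    · intro h
      exact ((huniq i).choose_spec.2 j h).symm
    · rintro rfl
      exact hσfdvd i
  set Sj : Fin r → Finset (Fin s) := fun j => Finset.univ.filter (fun i => σf i = j) with hSj
  have hmemS' : ∀ i j, i ∈ Sj j ↔ σf i = j := by
    intro i j; simp [hSj]
  have hPdvd : ∀ j, (∏ i ∈ Sj j, 𝓕 i) ∣ (Fj j).map E := by
    intro j
    refine prod_primes_dvd' _ _ _ (fun i _ => h𝓕prime i) (fun i hi => ?_)
      (fun i _ k _ hik => hnassoc i (Finset.mem_univ i) k (Finset.mem_univ k) hik)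
    exact (hmemS i j).mpr ((hmemS' i j).mp hi)
  have hprodP : (∏ j, ∏ i ∈ Sj j, 𝓕 i) = ∏ i, 𝓕 i := by
    rw [hSj]
    exact Finset.prod_fiberwise Finset.univ σf 𝓕
  set Rj : Fin r → Polynomial (PowerSeries K) := fun j => (hPdvd j).choose with hRj
  have hRdef : ∀ j, (Fj j).map E = (∏ i ∈ Sj j, 𝓕 i) * Rj j := fun j => (hPdvd j).choose_spec
  have hPne : (∏ j, ∏ i ∈ Sj j, 𝓕 i) ≠ 0 := by
    rw [hprodP]
    exact Finset.prod_ne_zero_iff.mpr fun i _ => h𝓕ne i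
  have hprodR : (∏ j, Rj j) = Polynomial.C u := by
    have h1 : (∏ j, ∏ i ∈ Sj j, 𝓕 i) * (∏ j, Rj j)
        = (∏ j, ∏ i ∈ Sj j, 𝓕 i) * Polynomial.C u := by
      rw [← Finset.prod_mul_distrib]
      have h2 : (∏ j, ((∏ i ∈ Sj j, 𝓕 i) * Rj j)) = ∏ j, (Fj j).map E :=
        Finset.prod_congr rfl fun j _ => (hRdef j).symm
      rw [h2, ← hEFprod, hfa, hprodP, mul_comm]
    exact mul_left_cancel₀ hPne h1
  have hRunit : ∀ j, IsUnit (Rj j) := by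
    intro j
    exact isUnit_of_dvd_unit (hprodR ▸ Finset.dvd_prod_of_mem Rj (Finset.mem_univ j))
      (hprodR ▸ (Polynomial.isUnit_C.mpr hu))
  -- ====================== the key analytic identity ======================
  have hkey : ∀ j, (∑ i ∈ Sj j,
        (Polynomial.C u * ∏ k ∈ Finset.univ.erase i, 𝓕 k) * derivative (𝓕 i))
      = ((∏ l ∈ Finset.univ.erase j, Fj l) * derivative (Fj j)).map E := by
    intro j
    obtain ⟨rj, hrju, hrj⟩ := Polynomial.isUnit_iff.mp (hRunit j)
    have hQFj : (∏ l ∈ Finset.univ.erase j, Fj l) * Fj j = F := by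
      rw [Finset.prod_erase_mul _ _ (Finset.mem_univ j), ← hF]
    have hterm : ∀ i ∈ Sj j,
        Polynomial.C u * ∏ k ∈ Finset.univ.erase i, 𝓕 k
          = ((∏ l ∈ Finset.univ.erase j, Fj l).map E * Polynomial.C rj)
            * ∏ k ∈ (Sj j).erase i, 𝓕 k := by
      intro i hi
      apply mul_right_cancel₀ (h𝓕ne i)
      have lhs : (Polynomial.C u * ∏ k ∈ Finset.univ.erase i, 𝓕 k) * 𝓕 i = F.map E := by
        rw [mul_assoc, Finset.prod_erase_mul _ _ (Finset.mem_univ i), ← hfa]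
      have rhs : (((∏ l ∈ Finset.univ.erase j, Fj l).map E * Polynomial.C rj)
          * ∏ k ∈ (Sj j).erase i, 𝓕 k) * 𝓕 i = F.map E := by
        rw [mul_assoc, Finset.prod_erase_mul _ _ hi]
        calc ((∏ l ∈ Finset.univ.erase j, Fj l).map E * Polynomial.C rj) * ∏ k ∈ Sj j, 𝓕 k
            = (∏ l ∈ Finset.univ.erase j, Fj l).map E * ((∏ k ∈ Sj j, 𝓕 k) * Polynomial.C rj) :=
              by ring
          _ = (∏ l ∈ Finset.univ.erase j, Fj l).map E * ((∏ k ∈ Sj j, 𝓕 k) * Rj j) := by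
              rw [hrj]
          _ = (∏ l ∈ Finset.univ.erase j, Fj l).map E * (Fj j).map E := by rw [← hRdef j]
          _ = F.map E := by rw [← Polynomial.map_mul, hQFj]
      rw [lhs, rhs]
    calc (∑ i ∈ Sj j, (Polynomial.C u * ∏ k ∈ Finset.univ.erase i, 𝓕 k) * derivative (𝓕 i))
        = ∑ i ∈ Sj j, (((∏ l ∈ Finset.univ.erase j, Fj l).map E * Polynomial.C rj)
            * ∏ k ∈ (Sj j).erase i, 𝓕 k) * derivative (𝓕 i) := by
          refine Finset.sum_congr rfl fun i hi => ?_
          rw [hterm i hi]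
      _ = ((∏ l ∈ Finset.univ.erase j, Fj l).map E * Polynomial.C rj)
            * ∑ i ∈ Sj j, (∏ k ∈ (Sj j).erase i, 𝓕 k) * derivative (𝓕 i) := by
          rw [Finset.mul_sum]
          exact Finset.sum_congr rfl fun i _ => by ring
      _ = ((∏ l ∈ Finset.univ.erase j, Fj l).map E * Polynomial.C rj)
            * derivative (∏ i ∈ Sj j, 𝓕 i) := by
          rw [derivative_finset_prod]
      _ = ((∏ l ∈ Finset.univ.erase j, Fj l) * derivative (Fj j)).map E := by
          rw [Polynomial.map_mul, ← Polynomial.derivative_map]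
          rw [hRdef j, ← hrj, derivative_mul, Polynomial.derivative_C, mul_zero, add_zero]
          ring
  -- ====================== linearity of Gm ======================
  have hGm' : ∀ w : Fin s → K, truncX (dx + 1)
      (∑ i, Polynomial.C (PowerSeries.C (w i)) *
        ((Polynomial.C u * ∏ k ∈ Finset.univ.erase i, 𝓕 k) * derivative (𝓕 i)))
      = ∑ i, Polynomial.C (Polynomial.C (w i)) * truncX (dx + 1)
        ((Polynomial.C u * ∏ k ∈ Finset.univ.erase i, 𝓕 k) * derivative (𝓕 i)) := by
    intro w
    rw [truncX_sum]
    exact Finset.sum_congr rfl fun i _ => truncX_C_mul _ _ _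
  have hGmlin : ∀ μ : Fin s → 𝔽, Gm μ = ∑ i, Polynomial.C (Polynomial.C ((μ i : K)))
      * truncX (dx + 1)
        ((Polynomial.C u * ∏ k ∈ Finset.univ.erase i, 𝓕 k) * derivative (𝓕 i)) := by
    intro μ
    rw [hGm μ, hGm']
  have hGmadd : ∀ μ ν, Gm (μ + ν) = Gm μ + Gm ν := by
    intro μ ν
    rw [hGmlin, hGmlin, hGmlin, ← Finset.sum_add_distrib]
    refine Finset.sum_congr rfl fun i _ => ?_
    have hco : (((μ + ν) i : 𝔽) : K) = ((μ i : 𝔽) : K) + ((ν i : 𝔽) : K) := rfl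
    rw [hco, map_add, map_add, add_mul]
  have hGmzero : Gm 0 = 0 := by
    rw [hGmlin]
    refine Finset.sum_eq_zero fun i _ => ?_
    simp only [Pi.zero_apply, ZeroMemClass.coe_zero, map_zero, zero_mul]
  have hGmsmul : ∀ (c : 𝔽) μ, Gm (c • μ) = Polynomial.C (Polynomial.C ((c : K))) * Gm μ := by
    intro c μ
    rw [hGmlin, hGmlin, Finset.mul_sum]
    refine Finset.sum_congr rfl fun i _ => ?_
    have hco : (((c • μ) i : 𝔽) : K) = (c : K) * ((μ i : 𝔽) : K) := by
      rw [Pi.smul_apply, smul_eq_mul, MulMemClass.coe_mul]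
    rw [hco, map_mul, map_mul, mul_assoc]
  have hGmsub : ∀ μ ν, Gm (μ - ν) = Gm μ - Gm ν := by
    intro μ ν
    have h1 : Gm (μ - ν) + Gm ν = Gm μ := by
      rw [← hGmadd, sub_add_cancel]
    linear_combination h1
  -- ====================== Gm of the recombination vectors ======================
  have hGmvj : ∀ j, Gm (v j) = (∏ l ∈ Finset.univ.erase j, Fj l) * derivative (Fj j) := by
    intro j
    have h1 : ∀ i, Polynomial.C (PowerSeries.C ((v j i : K)))
        = if 𝓕 i ∣ (Fj j).map E then 1 else 0 := by
      intro i
      rw [hv j i]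
      split_ifs with h <;> simp
    rw [hGm (v j)]
    have h2 : (∑ i, Polynomial.C (PowerSeries.C ((v j i : K))) *
        ((Polynomial.C u * ∏ k ∈ Finset.univ.erase i, 𝓕 k) * derivative (𝓕 i)))
        = ∑ i ∈ Sj j,
          ((Polynomial.C u * ∏ k ∈ Finset.univ.erase i, 𝓕 k) * derivative (𝓕 i)) := by
      rw [Finset.sum_filter]
      refine Finset.sum_congr rfl fun i _ => ?_
      rw [h1 i]
      have : (𝓕 i ∣ (Fj j).map E) ↔ σf i = j := hmemS i j
      split_ifs with h3 h4 h5
      · rw [one_mul]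
      · exact absurd (this.mp h3) h4
      · exact absurd (this.mpr h5) h3
      · rw [zero_mul]
    rw [h2, hkey j]
    apply truncX_map_E
    intro k
    refine Nat.lt_succ_of_le ?_
    rcases eq_or_ne (derivative (Fj j)) 0 with hd0 | hd0
    · rw [hd0, mul_zero]
      simp
    have hQne : (∏ l ∈ Finset.univ.erase j, Fj l) ≠ 0 :=
      Finset.prod_ne_zero_iff.mpr fun l _ => hFjne l
    refine (natDegree_coeff_le _ k).trans ?_
    have hdx' : dx = degX F := hdx
    have h5 : degX F = degX (∏ l ∈ Finset.univ.erase j, Fj l) + degX (Fj j) := by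
      have h6 : (∏ l ∈ Finset.univ.erase j, Fj l) * Fj j = F := by
        rw [Finset.prod_erase_mul _ _ (Finset.mem_univ j)]
        exact hF.symm
      rw [← h6, degX_mul hQne (hFjne j)]
    rw [hdx', h5, degX_mul hQne hd0]
    exact Nat.add_le_add_left (degX_derivative_le _) _
  -- ====================== degree bounds ======================
  have hNF1 : F.natDegree = ∑ i, (𝓕 i).natDegree := by
    have h1 : (F.map E).natDegree = F.natDegree := Polynomial.natDegree_map_eq_of_injective hEinj F
    rw [← h1, hfa, Polynomial.natDegree_mul (Polynomial.C_ne_zero.mpr hu.ne_zero)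
      (Finset.prod_ne_zero_iff.mpr fun i _ => h𝓕ne i), Polynomial.natDegree_C, zero_add]
    exact Polynomial.natDegree_prod _ _ fun i _ => h𝓕ne i
  have hNF2 : F.natDegree = ∑ j, (Fj j).natDegree := by
    conv_lhs => rw [hF]
    exact Polynomial.natDegree_prod _ _ fun j _ => hFjne j
  have hGmdeg : ∀ μ : Fin s → 𝔽, (Gm μ).natDegree ≤ F.natDegree - 1 := by
    intro μ
    rw [hGm μ]
    refine (natDegree_truncX_le _ _).trans ?_
    refine Polynomial.natDegree_sum_le_of_forall_le _ _ fun i _ => ?_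
    have e1 : (∏ k ∈ Finset.univ.erase i, 𝓕 k).natDegree + (𝓕 i).natDegree
        = ∑ i', (𝓕 i').natDegree := by
      rw [Polynomial.natDegree_prod _ _ (fun k _ => h𝓕ne k)]
      exact Finset.sum_erase_add _ _ (Finset.mem_univ i)
    have e2 : (derivative (𝓕 i)).natDegree ≤ (𝓕 i).natDegree - 1 :=
      Nat.le_sub_one_of_lt (Polynomial.natDegree_derivative_lt (h𝓕deg i))
    have e4 : (𝓕 i).natDegree ≠ 0 := h𝓕deg i
    refine Polynomial.natDegree_mul_le.trans ?_
    rw [Polynomial.natDegree_C, zero_add]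
    refine Polynomial.natDegree_mul_le.trans ?_
    have e5 : (Polynomial.C u * ∏ k ∈ Finset.univ.erase i, 𝓕 k).natDegree
        ≤ (∏ k ∈ Finset.univ.erase i, 𝓕 k).natDegree := by
      refine Polynomial.natDegree_mul_le.trans ?_
      rw [Polynomial.natDegree_C, zero_add]
    rw [hNF1]
    omega
  have hWdeg : ∀ c : Fin r → K, (∑ j, Polynomial.C (Polynomial.C (c j)) *
      ((∏ m ∈ Finset.univ.erase j, Fj m) * derivative (Fj j))).natDegree
        ≤ F.natDegree - 1 := by
    intro c
    refine Polynomial.natDegree_sum_le_of_forall_le _ _ fun j _ => ?_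
    have e1 : (∏ m ∈ Finset.univ.erase j, Fj m).natDegree + (Fj j).natDegree
        = ∑ j', (Fj j').natDegree := by
      rw [Polynomial.natDegree_prod _ _ (fun m _ => hFjne m)]
      exact Finset.sum_erase_add _ _ (Finset.mem_univ j)
    have e2 : (derivative (Fj j)).natDegree ≤ (Fj j).natDegree - 1 :=
      Nat.le_sub_one_of_lt (Polynomial.natDegree_derivative_lt (hFjdeg j))
    have e4 : (Fj j).natDegree ≠ 0 := hFjdeg j
    refine Polynomial.natDegree_mul_le.trans ?_
    rw [Polynomial.natDegree_C, zero_add]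
    refine Polynomial.natDegree_mul_le.trans ?_
    rw [hNF2]
    omega
  -- ====================== closure side ======================
  have hFA : F.map ψ ≠ 0 := by
    intro h
    exact hF0 ((Polynomial.map_eq_zero_iff hψinj).mp h)
  have hsepA : (F.map ψ).Separable := by
    rw [hψ, ← Polynomial.map_map]
    exact hsep.map
  have hdern : ∀ φ, Polynomial.eval φ (F.map ψ) = 0 →
      Polynomial.eval φ (derivative (F.map ψ)) ≠ 0 := by
    intro φ h0 hd
    obtain ⟨a, b, hab⟩ := hsepA
    have h1 := congrArg (Polynomial.eval φ) hab
    rw [Polynomial.eval_add, Polynomial.eval_mul, Polynomial.eval_mul, h0, hd,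
      mul_zero, mul_zero, add_zero, Polynomial.eval_one] at h1
    exact zero_ne_one h1
  have hprodA : F.map ψ = ∏ j, (Fj j).map ψ := by
    conv_lhs => rw [hF]
    rw [Polynomial.map_prod]
  have hrootFj : ∀ (j : Fin r) (φ : AlgebraicClosure (RatFunc K)),
      Polynomial.eval φ ((Fj j).map ψ) = 0 → Polynomial.eval φ (F.map ψ) = 0 := by
    intro j φ h
    rw [hprodA, Polynomial.eval_prod]
    exact Finset.prod_eq_zero (Finset.mem_univ j) h
  have huniqroot : ∀ φ, Polynomial.eval φ (F.map ψ) = 0 →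
      ∃! j, Polynomial.eval φ ((Fj j).map ψ) = 0 := by
    intro φ h0
    have h1 : ∃ j, Polynomial.eval φ ((Fj j).map ψ) = 0 := by
      have h2 := h0
      rw [hprodA, Polynomial.eval_prod] at h2
      obtain ⟨j, _, hj⟩ := Finset.prod_eq_zero_iff.mp h2
      exact ⟨j, hj⟩
    obtain ⟨j, hj⟩ := h1
    refine ⟨j, hj, fun j' hj' => ?_⟩
    by_contra hne
    apply hdern φ h0
    rw [hprodA, derivative_finset_prod, Polynomial.eval_finset_sum]
    refine Finset.sum_eq_zero fun l _ => ?_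
    rw [Polynomial.eval_mul]
    rcases eq_or_ne l j with rfl | hlj
    · rw [eval_prod_erase_eq_zero Finset.univ _ (Finset.mem_univ j')
        (fun h => hne h.symm) φ hj', zero_mul]
    · rw [eval_prod_erase_eq_zero Finset.univ _ (Finset.mem_univ j) hlj φ hj, zero_mul]
  have hdegA : ∀ j, ((Fj j).map ψ).natDegree ≠ 0 := by
    intro j
    rw [Polynomial.natDegree_map_eq_of_injective hψinj]
    exact hFjdeg j
  have hrootexists : ∀ j, ∃ φ, Polynomial.eval φ ((Fj j).map ψ) = 0 := by
    intro j
    obtain ⟨φ, hφ⟩ := IsAlgClosed.exists_root ((Fj j).map ψ)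
      (fun hdeg => hdegA j (Polynomial.natDegree_eq_zero_iff_degree_le_zero.mpr (le_of_eq hdeg)))
    exact ⟨φ, hφ⟩
  have hFjprim : ∀ j, (Fj j).IsPrimitive := fun j r' hr' => hprim r' (hr'.trans (hFjdvd j))
  have hFLirr : ∀ j, Irreducible ((Fj j).map (algebraMap (Polynomial K) (RatFunc K))) :=
    fun j => ((hFjprim j).irreducible_iff_irreducible_map_fraction_map).mp (hFirr j)
  have hevalview : ∀ (P : Polynomial (Polynomial K)) (φ : AlgebraicClosure (RatFunc K)),
      Polynomial.eval φ (P.map ψ)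
        = Polynomial.aeval φ (P.map (algebraMap (Polynomial K) (RatFunc K))) := by
    intro P φ
    rw [Polynomial.aeval_def, ← Polynomial.eval_map, Polynomial.map_map, ← hψ]
  have hGal : ∀ (j : Fin r) (φ φ' : AlgebraicClosure (RatFunc K)),
      Polynomial.eval φ ((Fj j).map ψ) = 0 → Polynomial.eval φ' ((Fj j).map ψ) = 0 →
      ∀ (P : Polynomial (Polynomial K)) (x : K),
        Polynomial.eval φ (P.map ψ) / Polynomial.eval φ (derivative (F.map ψ))
          = ψ (Polynomial.C x) →
        Polynomial.eval φ' (P.map ψ) / Polynomial.eval φ' (derivative (F.map ψ))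
          = ψ (Polynomial.C x) := by
    intro j φ φ' hφ hφ' P x hx
    have hq1 : Polynomial.aeval φ ((Fj j).map (algebraMap (Polynomial K) (RatFunc K))) = 0 := by
      rw [← hevalview]
      exact hφ
    have hq2 : Polynomial.aeval φ' ((Fj j).map (algebraMap (Polynomial K) (RatFunc K))) = 0 := by
      rw [← hevalview]
      exact hφ'
    obtain ⟨σ, hσ⟩ := exists_algHom_root (hFLirr j) hq1 hq2
    have htrans : ∀ (T : Polynomial (Polynomial K)),
        σ (Polynomial.eval φ (T.map ψ)) = Polynomial.eval φ' (T.map ψ) := by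
      intro T
      rw [hevalview, hevalview, ← hσ, ← Polynomial.aeval_algHom_apply]
    have hderm : derivative (F.map ψ) = (derivative F).map ψ := Polynomial.derivative_map F ψ
    rw [hderm] at hx ⊢
    calc Polynomial.eval φ' (P.map ψ) / Polynomial.eval φ' ((derivative F).map ψ)
        = σ (Polynomial.eval φ (P.map ψ)) / σ (Polynomial.eval φ ((derivative F).map ψ)) := by
          rw [htrans, htrans]
      _ = σ (Polynomial.eval φ (P.map ψ) / Polynomial.eval φ ((derivative F).map ψ)) :=
          (map_div₀ σ _ _).symm
      _ = σ (ψ (Polynomial.C x)) := by rw [hx]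
      _ = ψ (Polynomial.C x) := σ.commutes (algebraMap (Polynomial K) (RatFunc K) (Polynomial.C x))
  have hevalcomb : ∀ (c : Fin r → K) (φ : AlgebraicClosure (RatFunc K)) (j : Fin r),
      Polynomial.eval φ ((Fj j).map ψ) = 0 →
      (∀ j', Polynomial.eval φ ((Fj j').map ψ) = 0 → j' = j) →
      Polynomial.eval φ ((∑ l, Polynomial.C (Polynomial.C (c l)) *
          ((∏ m ∈ Finset.univ.erase l, Fj m) * derivative (Fj l))).map ψ)
        = ψ (Polynomial.C (c j)) * Polynomial.eval φ (derivative (F.map ψ)) := by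
    intro c φ j hj huj
    have hpush : (∑ l, Polynomial.C (Polynomial.C (c l)) *
          ((∏ m ∈ Finset.univ.erase l, Fj m) * derivative (Fj l))).map ψ
        = ∑ l, Polynomial.C (ψ (Polynomial.C (c l))) *
            ((∏ m ∈ Finset.univ.erase l, (Fj m).map ψ) * derivative ((Fj l).map ψ)) := by
      rw [Polynomial.map_sum]
      refine Finset.sum_congr rfl fun l _ => ?_
      rw [Polynomial.map_mul, Polynomial.map_C, Polynomial.map_mul, Polynomial.map_prod,
        Polynomial.derivative_map]
    have hdval : Polynomial.eval φ (derivative (F.map ψ))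
        = Polynomial.eval φ (∏ m ∈ Finset.univ.erase j, (Fj m).map ψ)
          * Polynomial.eval φ (derivative ((Fj j).map ψ)) := by
      rw [hprodA]
      refine eval_derivative_prod_root Finset.univ _ (Finset.mem_univ j) φ hj
        (fun l _ hlj => ?_)
      exact eval_prod_erase_eq_zero Finset.univ _ (Finset.mem_univ j)
        (fun h => hlj h) φ hj
    rw [hpush, Polynomial.eval_finset_sum]
    rw [Finset.sum_eq_single j (fun l _ hlj => ?_) (fun h => absurd (Finset.mem_univ j) h)]
    · rw [Polynomial.eval_mul, Polynomial.eval_C, Polynomial.eval_mul, hdval]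
    · rw [Polynomial.eval_mul, Polynomial.eval_mul]
      rw [eval_prod_erase_eq_zero Finset.univ _ (Finset.mem_univ j)
        (fun h => hlj h) φ hj, zero_mul, mul_zero]
  set φj : Fin r → AlgebraicClosure (RatFunc K) := fun j => (hrootexists j).choose with hφjd
  have hφjr : ∀ j, Polynomial.eval (φj j) ((Fj j).map ψ) = 0 := fun j => (hrootexists j).choose_spec
  have hφjF : ∀ j, Polynomial.eval (φj j) (F.map ψ) = 0 := fun j => hrootFj j _ (hφjr j)
  have hφjuniq : ∀ j j', Polynomial.eval (φj j) ((Fj j').map ψ) = 0 → j' = j := by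
    intro j j' h
    obtain ⟨j0, _, huj0⟩ := huniqroot (φj j) (hφjF j)
    rw [huj0 j' h, huj0 j (hφjr j)]
  have hgen : ∀ c : Fin r → 𝔽, Gm (∑ j, c j • v j)
      = ∑ j, Polynomial.C (Polynomial.C ((c j : K))) *
          ((∏ m ∈ Finset.univ.erase j, Fj m) * derivative (Fj j)) := by
    intro c
    have h : ∀ t : Finset (Fin r), Gm (∑ j ∈ t, c j • v j)
        = ∑ j ∈ t, Polynomial.C (Polynomial.C ((c j : K))) *
            ((∏ m ∈ Finset.univ.erase j, Fj m) * derivative (Fj j)) := by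
      intro t
      induction t using Finset.induction_on with
      | empty => simpa using hGmzero
      | @insert a t ha ih =>
        rw [Finset.sum_insert ha, hGmadd, hGmsmul, ih, hGmvj, Finset.sum_insert ha]
    exact h Finset.univ
  have hψC : ∀ x : K, ψ (Polynomial.C x)
      = algebraMap (RatFunc K) (AlgebraicClosure (RatFunc K))
          (algebraMap (Polynomial K) (RatFunc K) (Polynomial.C x)) := fun x => rfl
  -- ====================== the three statements ======================
  constructor
  · intro μ
    constructor
    · -- forward direction
      intro hres
      rcases isEmpty_or_nonempty (Fin s) with hempty | hne
      · refine ⟨0, 0, Submodule.zero_mem _, hGmzero, ?_⟩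
        have : μ = 0 := funext fun i => isEmptyElim i
        rw [this, add_zero]
      have hN1 : 1 ≤ F.natDegree := by
        obtain ⟨i0⟩ := hne
        rw [hNF1]
        calc 1 ≤ (𝓕 i0).natDegree := Nat.one_le_iff_ne_zero.mpr (h𝓕deg i0)
          _ ≤ ∑ i, (𝓕 i).natDegree :=
            Finset.single_le_sum (f := fun i => (𝓕 i).natDegree)
              (fun i _ => Nat.zero_le _) (Finset.mem_univ i0)
      have hc : ∀ j, ∃ x : 𝔽, Polynomial.eval (φj j) ((Gm μ).map ψ) /
          Polynomial.eval (φj j) (derivative (F.map ψ)) = ψ (Polynomial.C (x : K)) := by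
        intro j
        obtain ⟨x, hx⟩ := hres (φj j) (hφjF j)
        exact ⟨x, by rw [hψC]; exact hx.symm⟩
      choose cc hcc using hc
      have hρ : ∀ (φ : AlgebraicClosure (RatFunc K)) (j : Fin r),
          Polynomial.eval φ ((Fj j).map ψ) = 0 →
          Polynomial.eval φ ((Gm μ).map ψ)
            = ψ (Polynomial.C ((cc j : K))) * Polynomial.eval φ (derivative (F.map ψ)) := by
        intro φ j hφ
        have h1 := hGal j (φj j) φ (hφjr j) hφ (Gm μ) ((cc j : K)) (hcc j)
        have h2 : Polynomial.eval φ (F.map ψ) = 0 := hrootFj j φ hφ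
        have hd := hdern φ h2
        rw [div_eq_iff hd] at h1
        exact h1
      have hGmT : Gm μ = ∑ l, Polynomial.C (Polynomial.C ((cc l : K))) *
          ((∏ m ∈ Finset.univ.erase l, Fj m) * derivative (Fj l)) := by
        have hmap0 : (Gm μ - ∑ l, Polynomial.C (Polynomial.C ((cc l : K))) *
            ((∏ m ∈ Finset.univ.erase l, Fj m) * derivative (Fj l))).map ψ = 0 := by
          refine Polynomial.eq_zero_of_natDegree_lt_card_of_eval_eq_zero' _
            ((F.map ψ).roots.toFinset) ?_ ?_
          · intro φ hφmem
            have hφ : Polynomial.eval φ (F.map ψ) = 0 :=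
              ((Polynomial.mem_roots').mp (Multiset.mem_toFinset.mp hφmem)).2
            obtain ⟨j, hj, huj⟩ := huniqroot φ hφ
            rw [Polynomial.map_sub, Polynomial.eval_sub,
              hρ φ j hj, hevalcomb (fun l => ((cc l : K))) φ j hj huj, sub_self]
          · have hnd : (F.map ψ).roots.Nodup := Polynomial.nodup_roots hsepA
            have hcard : (F.map ψ).roots.toFinset.card = (F.map ψ).natDegree := by
              rw [Multiset.toFinset_card_of_nodup hnd]
              have hsp := Polynomial.Splits.natDegree_eq_card_roots
                (IsAlgClosed.splits (F.map ψ))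
              exact hsp.symm
            rw [hcard, Polynomial.natDegree_map_eq_of_injective hψinj,
              Polynomial.natDegree_map_eq_of_injective hψinj]
            have h1 := hGmdeg μ
            have h2 := hWdeg (fun l => ((cc l : K)))
            have h3 := Polynomial.natDegree_sub_le (Gm μ)
              (∑ l, Polynomial.C (Polynomial.C ((cc l : K))) *
                ((∏ m ∈ Finset.univ.erase l, Fj m) * derivative (Fj l)))
            omega
        have h4 := (Polynomial.map_eq_zero_iff hψinj).mp hmap0
        exact sub_eq_zero.mp h4
      refine ⟨∑ j, cc j • v j, μ - ∑ j, cc j • v j, ?_, ?_, by abel⟩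
      · exact Submodule.sum_mem _ fun j _ =>
          Submodule.smul_mem _ _ (Submodule.subset_span ⟨j, rfl⟩)
      · rw [hGmsub, hgen, ← hGmT, sub_self]
    · -- backward direction
      rintro ⟨a, b, ha, hb, rfl⟩ φ hφ
      obtain ⟨c, hcsum⟩ := (Submodule.mem_span_range_iff_exists_fun 𝔽).mp ha
      have hGmab : Gm (a + b) = ∑ j, Polynomial.C (Polynomial.C ((c j : K))) *
          ((∏ m ∈ Finset.univ.erase j, Fj m) * derivative (Fj j)) := by
        rw [hGmadd, hb, add_zero, ← hcsum, hgen]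
      obtain ⟨j, hj, huj⟩ := huniqroot φ hφ
      have hd := hdern φ hφ
      rw [hGmab, hevalcomb (fun l => ((c l : K))) φ j hj huj]
      refine ⟨c j, ?_⟩
      show ψ (Polynomial.C ((c j : K))) = _
      exact (mul_div_cancel_right₀ _ hd).symm
  · -- linear independence
    intro μ hμ hGm0
    obtain ⟨c, hcsum⟩ := (Submodule.mem_span_range_iff_exists_fun 𝔽).mp hμ
    have h1 : (∑ j, Polynomial.C (Polynomial.C ((c j : K))) *
        ((∏ m ∈ Finset.univ.erase j, Fj m) * derivative (Fj j))) = 0 := by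
      rw [← hgen, hcsum, hGm0]
    have hc0 : ∀ j, c j = 0 := by
      intro j
      have h2 := congrArg (fun P => Polynomial.eval (φj j) (P.map ψ)) h1
      simp only [Polynomial.map_zero, Polynomial.eval_zero] at h2
      rw [hevalcomb (fun l => ((c l : K))) (φj j) j (hφjr j) (hφjuniq j)] at h2
      have hd := hdern (φj j) (hφjF j)
      have h3 : ψ (Polynomial.C ((c j : K))) = 0 := by
        rcases mul_eq_zero.mp h2 with h | h
        · exact h
        · exact absurd h hd
      have h4 : Polynomial.C ((c j : K)) = (0 : Polynomial K) := by
        apply hψinj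
        rw [h3, map_zero]
      have h5 : ((c j : K)) = 0 := by
        have := Polynomial.C_inj.mp (h4.trans (Polynomial.C_0).symm)
        exact this
      exact Subtype.ext h5
    rw [← hcsum]
    refine Finset.sum_eq_zero fun j _ => ?_
    rw [hc0 j, zero_smul]
end
end

section
/- Let F, G ∈ K[x,y] with F separable in y of y-degree d_y. Then all residues ρ_k of G/F at the roots of F (k=1,…,d_y) satisfy ρ_k' = 0 if and only if F divides D(G) := (G_x F_y − G_y F_x)F_y − (F_{xy}F_y − F_{yy}F_x)G in K(x)[y]. -/
open Polynomial

noncomputable section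

/-- The partial derivative with respect to `x` of a bivariate polynomial in `K[x][y]`
(coefficientwise derivative). -/
def pderivX {K : Type*} [CommRing K] (P : Polynomial (Polynomial K)) :
    Polynomial (Polynomial K) :=
  P.sum fun k a => Polynomial.C (derivative a) * Polynomial.X ^ k

section Aux
variable {K : Type*} [Field K] {Ω : Type*} [Field Ω] [Algebra (RatFunc K) Ω]
    [Algebra K Ω] [IsScalarTower K (RatFunc K) Ω]

lemma pderivX_add {K : Type*} [CommRing K] (P Q : Polynomial (Polynomial K)) :
    pderivX (P + Q) = pderivX P + pderivX Q := by
  unfold pderivX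
  refine Polynomial.sum_add_index P Q _ (fun i => by simp) (fun a b₁ b₂ => by
    rw [map_add, map_add, add_mul])

lemma pderivX_monomial {K : Type*} [CommRing K] (n : ℕ) (a : Polynomial K) :
    pderivX (monomial n a) = Polynomial.C (derivative a) * Polynomial.X ^ n := by
  unfold pderivX
  exact Polynomial.sum_monomial_index a _ (by simp)

lemma D_coeff (D : Derivation K Ω Ω)
    (hDX : D (algebraMap (RatFunc K) Ω RatFunc.X) = 1) (a : Polynomial K) :
    D (algebraMap (RatFunc K) Ω (algebraMap (Polynomial K) (RatFunc K) a)) =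
      algebraMap (RatFunc K) Ω (algebraMap (Polynomial K) (RatFunc K) (derivative a)) := by
  induction a using Polynomial.induction_on' with
  | add p q hp hq => simp [hp, hq]
  | monomial n c =>
    rw [Polynomial.derivative_monomial]
    have hC : ∀ c : K, algebraMap (RatFunc K) Ω (algebraMap (Polynomial K) (RatFunc K)
        (Polynomial.C c)) = algebraMap K Ω c := by
      intro c
      rw [RatFunc.algebraMap_C, ← RatFunc.algebraMap_eq_C, ← IsScalarTower.algebraMap_apply]
    have hX : algebraMap (RatFunc K) Ω (algebraMap (Polynomial K) (RatFunc K) Polynomial.X)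
        = algebraMap (RatFunc K) Ω RatFunc.X := by rw [RatFunc.algebraMap_X]
    rw [← Polynomial.C_mul_X_pow_eq_monomial, ← Polynomial.C_mul_X_pow_eq_monomial]
    set x : Ω := algebraMap (RatFunc K) Ω RatFunc.X with hx
    have h1 : algebraMap (RatFunc K) Ω (algebraMap (Polynomial K) (RatFunc K)
        (Polynomial.C c * Polynomial.X ^ n)) = algebraMap K Ω c * x ^ n := by
      rw [map_mul, map_mul, map_pow, map_pow, hC, hX]
    have h2 : algebraMap (RatFunc K) Ω (algebraMap (Polynomial K) (RatFunc K)
        (Polynomial.C (c * (n : K)) * Polynomial.X ^ (n - 1)))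
        = algebraMap K Ω c * (n : Ω) * x ^ (n - 1) := by
      rw [map_mul, map_mul, map_pow, map_pow, hC, hX, map_mul, map_natCast]
    rw [h1, h2, Derivation.leibniz, Derivation.map_algebraMap, Derivation.leibniz_pow, hDX]
    simp only [smul_zero, add_zero, smul_smul, smul_eq_mul, mul_one, nsmul_eq_mul]
    ring

set_option linter.unusedSectionVars false in
lemma D_eval (D : Derivation K Ω Ω)
    (hDX : D (algebraMap (RatFunc K) Ω RatFunc.X) = 1)
    (P : Polynomial (Polynomial K)) (φ : Ω) :
    D (Polynomial.eval φ (P.map ((algebraMap (RatFunc K) Ω).comp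
        (algebraMap (Polynomial K) (RatFunc K))))) =
      Polynomial.eval φ ((pderivX P).map ((algebraMap (RatFunc K) Ω).comp
        (algebraMap (Polynomial K) (RatFunc K)))) +
      Polynomial.eval φ ((derivative P).map ((algebraMap (RatFunc K) Ω).comp
        (algebraMap (Polynomial K) (RatFunc K)))) * D φ := by
  set r := (algebraMap (RatFunc K) Ω).comp (algebraMap (Polynomial K) (RatFunc K)) with hr
  induction P using Polynomial.induction_on' with
  | add p q hp hq =>
    simp only [Polynomial.map_add, Polynomial.eval_add, map_add, hp, hq, pderivX_add,
      derivative_add]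
    ring
  | monomial n a =>
    rw [pderivX_monomial, derivative_monomial, Polynomial.map_monomial,
      Polynomial.eval_monomial, Polynomial.map_mul, Polynomial.map_pow, Polynomial.map_C,
      Polynomial.map_X, Polynomial.eval_mul, Polynomial.eval_pow, Polynomial.eval_C,
      Polynomial.eval_X, Polynomial.map_monomial, Polynomial.eval_monomial]
    have hra : ∀ b : Polynomial K, r b = algebraMap (RatFunc K) Ω
        (algebraMap (Polynomial K) (RatFunc K) b) := fun b => rfl
    rw [Derivation.leibniz, Derivation.leibniz_pow, hra, hra, hra, D_coeff D hDX,
      map_mul, map_natCast]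
    simp only [smul_eq_mul, nsmul_eq_mul, smul_smul, map_mul, map_natCast]
    ring

lemma dvd_iff_roots {Ω : Type*} [Field Ω] [IsAlgClosed Ω] {q p : Polynomial Ω}
    (hq : q.Separable) : q ∣ p ↔ ∀ φ : Ω, q.IsRoot φ → p.IsRoot φ := by
  constructor
  · rintro ⟨c, rfl⟩ φ h
    simp [Polynomial.IsRoot, Polynomial.eval_mul, h.eq_zero]
  · intro h
    classical
    rcases eq_or_ne p 0 with rfl | hp
    · exact dvd_zero q
    have hq0 : q ≠ 0 := hq.ne_zero
    have hle : q.roots ≤ p.roots := by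
      refine Multiset.le_iff_count.2 fun a => ?_
      by_cases ha : a ∈ q.roots
      · have h1 : Multiset.count a q.roots ≤ 1 :=
          Multiset.nodup_iff_count_le_one.1 (Polynomial.nodup_roots hq) a
        have h2 : 0 < Multiset.count a p.roots :=
          Multiset.count_pos.2 ((Polynomial.mem_roots hp).2 (h a ((Polynomial.mem_roots hq0).1 ha)))
        omega
      · simp [Multiset.count_eq_zero_of_notMem ha]
    have hdvd : (q.roots.map fun a => Polynomial.X - Polynomial.C a).prod ∣ p :=
      (Multiset.prod_X_sub_C_dvd_iff_le_roots hp _).2 hle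
    have hsplit : q.roots.card = q.natDegree :=
      (Polynomial.splits_iff_card_roots).1 (IsAlgClosed.splits q)
    have heq := Polynomial.C_leadingCoeff_mul_prod_multiset_X_sub_C hsplit
    have hlc : q.leadingCoeff ≠ 0 := Polynomial.leadingCoeff_ne_zero.2 hq0
    have hassoc : Associated ((q.roots.map fun a => Polynomial.X - Polynomial.C a).prod) q :=
      ⟨(Polynomial.isUnit_C.2 (isUnit_iff_ne_zero.2 hlc)).unit, by
        rw [IsUnit.unit_spec, mul_comm, heq]⟩
    exact hassoc.symm.dvd.trans hdvd

end Aux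

/-- Let `F, G ∈ K[x,y]` with `F` separable in `y`.  All residues of `G/F`
at the roots of `F` have vanishing derivative if and only if `F` divides
`D(G) = (G_x F_y − G_y F_x)F_y − (F_{xy}F_y − F_{yy}F_x)G` in `K(x)[y]`. -/
theorem stmt14 {K : Type*} [Field K]
    (Ω : Type*) [Field Ω] [Algebra (RatFunc K) Ω] [IsAlgClosure (RatFunc K) Ω]
    [Algebra K Ω] [IsScalarTower K (RatFunc K) Ω]
    (D : Derivation K Ω Ω)
    (hDX : D (algebraMap (RatFunc K) Ω RatFunc.X) = 1)
    (F G : Polynomial (Polynomial K))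
    (hsep : (F.map (algebraMap (Polynomial K) (RatFunc K))).Separable) :
    (∀ φ : Ω,
        Polynomial.eval φ (F.map ((algebraMap (RatFunc K) Ω).comp
          (algebraMap (Polynomial K) (RatFunc K)))) = 0 →
        D (Polynomial.eval φ (G.map ((algebraMap (RatFunc K) Ω).comp
              (algebraMap (Polynomial K) (RatFunc K)))) /
            Polynomial.eval φ (derivative (F.map ((algebraMap (RatFunc K) Ω).comp
              (algebraMap (Polynomial K) (RatFunc K)))))) = 0)
      ↔
    (F.map (algebraMap (Polynomial K) (RatFunc K)) ∣
      ((pderivX G * derivative F - derivative G * pderivX F) * derivative F -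
          (pderivX (derivative F) * derivative F - derivative (derivative F) * pderivX F)
            * G).map (algebraMap (Polynomial K) (RatFunc K))) := by
  classical
  haveI : IsAlgClosed Ω := IsAlgClosure.isAlgClosed (RatFunc K)
  set r := (algebraMap (RatFunc K) Ω).comp (algebraMap (Polynomial K) (RatFunc K)) with hr
  set DGp := (pderivX G * derivative F - derivative G * pderivX F) * derivative F -
      (pderivX (derivative F) * derivative F - derivative (derivative F) * pderivX F) * G
      with hDGp
  have hqsep : ((F.map (algebraMap (Polynomial K) (RatFunc K))).map
      (algebraMap (RatFunc K) Ω)).Separable := hsep.map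
  rw [← Polynomial.map_dvd_map' (algebraMap (RatFunc K) Ω), dvd_iff_roots hqsep]
  rw [Polynomial.map_map, Polynomial.map_map, ← hr]
  refine forall_congr' fun φ => imp_congr_right fun hφ => ?_
  -- setup
  have hvd : derivative (F.map r) = (derivative F).map r := Polynomial.derivative_map F r
  rw [hvd]
  set u := Polynomial.eval φ (G.map r) with hu
  set v := Polynomial.eval φ ((derivative F).map r) with hv
  have hφ' : Polynomial.eval φ (F.map r) = 0 := hφ
  have hvne : v ≠ 0 := by
    obtain ⟨a, b, hab⟩ := hqsep
    intro h0
    have h1 := congrArg (Polynomial.eval φ) hab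
    rw [Polynomial.map_map, ← hr] at h1
    rw [show derivative (F.map r) = (derivative F).map r from Polynomial.derivative_map F r] at h1
    simp only [Polynomial.eval_add, Polynomial.eval_mul, Polynomial.eval_one, hφ', ← hv, h0,
      mul_zero, add_zero, zero_add] at h1
    norm_num at h1
  have E1 := D_eval D hDX F φ
  rw [hφ', map_zero, ← hv] at E1
  have E2 := D_eval D hDX G φ
  rw [← hu] at E2
  have E3 := D_eval D hDX (derivative F) φ
  rw [← hv] at E3
  have hquot := Derivation.leibniz_div (D := D) u v
  simp only [smul_eq_mul] at hquot
  have hDGeval : Polynomial.eval φ (DGp.map r) =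
      (Polynomial.eval φ ((pderivX G).map r) * v
        - Polynomial.eval φ ((derivative G).map r) * Polynomial.eval φ ((pderivX F).map r)) * v
      - (Polynomial.eval φ ((pderivX (derivative F)).map r) * v
        - Polynomial.eval φ ((derivative (derivative F)).map r)
          * Polynomial.eval φ ((pderivX F).map r)) * u := by
    rw [hDGp]
    simp only [Polynomial.map_mul, Polynomial.map_sub, Polynomial.eval_mul, Polynomial.eval_sub,
      ← hu, ← hv]
  have key : Polynomial.eval φ (DGp.map r) = D (u / v) * v ^ 3 := by
    have key2 : Polynomial.eval φ (DGp.map r) = (v * D u - u * D v) * v := by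
      rw [hDGeval]
      linear_combination (u * Polynomial.eval φ ((derivative (derivative F)).map r)
          - Polynomial.eval φ ((derivative G).map r) * v) * E1.symm
        - v ^ 2 * E2 + (u * v) * E3
    rw [key2, hquot]
    field_simp
  constructor
  · intro h0
    show Polynomial.eval φ (DGp.map r) = 0
    rw [key, h0, zero_mul]
  · intro h0
    have h1 : Polynomial.eval φ (DGp.map r) = 0 := h0
    rw [key] at h1
    rcases mul_eq_zero.1 h1 with h2 | h2
    · exact h2
    · exact absurd h2 (pow_ne_zero 3 hvne)
end
end
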